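/- arXiv:1412.4386 — 9 statements merged into one kernel-verified Lean document; each statement's English description precedes it below -/
import Mathlib

section
/- Let E be a real Banach space, ∂_w a weak subdifferential, g : E → ]−∞,+∞] proper and lower semicontinuous, α, β > 0, u ∈ dom g, and g(u) ≤ inf_E g + αβ. Then there exists (s, x*) ∈ gra ∂_w g such that ‖s − u‖ ≤ α, g(s) ≤ g(u), and ‖x*‖ ≤ β. -/
open Pointwise

/-- The convex subdifferential of a continuous convex real function `h` at `x`. -/
def convSubdiff {E : Type*} [NormedAddCommGroup E] [NormedSpace ℝ E]
    (h : E → ℝ) (x : E) : Set (StrongDual ℝ E) :=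
  {z | ∀ y : E, h x + z (y - x) ≤ h y}

/-- A weak subdifferential: a rule associating with each proper lower semicontinuous
`f : E → ]-∞,+∞]` a multifunction `E ⇉ E*` such that (i) `0 ∈ ∂_w f(x)` whenever `f`
attains a strict global minimum at `x`, and (ii) `∂_w(f + h)(x) ⊆ ∂_w f(x) + ∂h(x)`
for every continuous convex real function `h` on `E`. -/
structure WeakSubdiff (E : Type*) [NormedAddCommGroup E] [NormedSpace ℝ E] where
  sd : (E → EReal) → E → Set (StrongDual ℝ E)
  zero_mem : ∀ f : E → EReal, (∃ x, f x ≠ ⊤) → (∀ x, f x ≠ ⊥) →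
    LowerSemicontinuous f →
    ∀ x : E, (∀ y : E, y ≠ x → f x < f y) → 0 ∈ sd f x
  sum_rule : ∀ f : E → EReal, (∃ x, f x ≠ ⊤) → (∀ x, f x ≠ ⊥) →
    LowerSemicontinuous f →
    ∀ h : E → ℝ, Continuous h → ConvexOn ℝ Set.univ h →
    ∀ x : E, sd (fun z => f z + (h z : EReal)) x ⊆ sd f x + convSubdiff h x

open Filter Topology in
/-- Ekeland's variational principle, strong real-valued form. -/
lemma my_ekeland {X : Type*} [MetricSpace X] [CompleteSpace X]
    {f : X → ℝ} (hf : LowerSemicontinuous f) {m : ℝ} (hm : ∀ x, m ≤ f x)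
    {β : ℝ} (hβ : 0 < β) (u : X) :
    ∃ s : X, f s + β * dist s u ≤ f u ∧ ∀ y : X, y ≠ s → f s < f y + β * dist y s := by
  classical
  set S : X → Set X := fun x => {y | f y + β * dist y x ≤ f x} with hS
  have hSx : ∀ x, x ∈ S x := by intro x; simp [hS]
  have hSclosed : ∀ x, IsClosed (S x) := by
    intro x
    have hls : LowerSemicontinuous (fun y => f y + β * dist y x) := by
      apply hf.add'
      · exact (Continuous.lowerSemicontinuous (continuous_const.mul
          (Continuous.dist continuous_id continuous_const)))
      · exact fun z => continuous_add.continuousAt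
    exact lowerSemicontinuous_iff_isClosed_preimage.mp hls (f x)
  have hSmono : ∀ x y, y ∈ S x → S y ⊆ S x := by
    intro x y hy z hz
    simp only [hS, Set.mem_setOf_eq] at *
    have ht := dist_triangle z y x
    nlinarith
  have hbdd : ∀ x : X, BddBelow (f '' S x) := by
    intro x
    refine ⟨m, ?_⟩
    rintro a ⟨y, -, rfl⟩
    exact hm y
  have hex : ∀ (n : ℕ) (x : X), ∃ y, y ∈ S x ∧ f y < sInf (f '' S x) + (1/2)^n := by
    intro n x
    have hne : (f '' S x).Nonempty := ⟨f x, x, hSx x, rfl⟩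
    have hlt : sInf (f '' S x) < sInf (f '' S x) + (1/2)^n :=
      lt_add_of_pos_right _ (by positivity)
    obtain ⟨a, ⟨y, hy, rfl⟩, ha⟩ := exists_lt_of_csInf_lt hne hlt
    exact ⟨y, hy, ha⟩
  choose nxt hnxt1 hnxt2 using hex
  set x : ℕ → X := fun n => Nat.rec u (fun n xn => nxt n xn) n with hx
  have hstep : ∀ n, x (n+1) ∈ S (x n) := fun n => hnxt1 n (x n)
  have hstep2 : ∀ n, f (x (n+1)) < sInf (f '' S (x n)) + (1/2)^n := fun n => hnxt2 n (x n)
  have hmem : ∀ n k, x (n+k) ∈ S (x n) := by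
    intro n k
    induction k with
    | zero => exact hSx (x n)
    | succ k ih => exact hSmono _ _ ih (hstep (n + k))
  have hmemle : ∀ n mm, n ≤ mm → x mm ∈ S (x n) := by
    intro n mm hle
    obtain ⟨k, rfl⟩ := Nat.exists_eq_add_of_le hle
    exact hmem n k
  have key : ∀ n, ∀ z ∈ S (x (n+1)), β * dist z (x (n+1)) ≤ (1/2)^n := by
    intro n z hz
    have h1 : f z + β * dist z (x (n+1)) ≤ f (x (n+1)) := hz
    have h2 : z ∈ S (x n) := hSmono _ _ (hstep n) hz
    have h3 : sInf (f '' S (x n)) ≤ f z := csInf_le (hbdd _) ⟨z, h2, rfl⟩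
    linarith [hstep2 n]
  have keyd : ∀ n, ∀ z ∈ S (x (n+1)), dist z (x (n+1)) ≤ (1/2)^n / β := by
    intro n z hz
    rw [le_div_iff₀ hβ]
    calc dist z (x (n+1)) * β = β * dist z (x (n+1)) := by ring
      _ ≤ (1/2)^n := key n z hz
  have hcauchy : CauchySeq (fun n => x (n+1)) := by
    apply cauchySeq_of_le_tendsto_0 (fun N => 2 * ((1:ℝ)/2)^N / β)
    · intro n mm N hn hmm
      have h1 : dist (x (n+1)) (x (N+1)) ≤ (1/2)^N / β :=
        keyd N _ (hmemle (N+1) (n+1) (by omega))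
      have h2 : dist (x (mm+1)) (x (N+1)) ≤ (1/2)^N / β :=
        keyd N _ (hmemle (N+1) (mm+1) (by omega))
      calc dist (x (n+1)) (x (mm+1)) ≤ dist (x (n+1)) (x (N+1)) + dist (x (N+1)) (x (mm+1)) :=
            dist_triangle _ _ _
        _ = dist (x (n+1)) (x (N+1)) + dist (x (mm+1)) (x (N+1)) := by rw [dist_comm (x (N+1))]
        _ ≤ 2 * (1/2)^N / β := by
            rw [show (2:ℝ) * (1/2)^N / β = (1/2)^N/β + (1/2)^N/β by ring]
            linarith
    · have h0 : Tendsto (fun N : ℕ => ((1:ℝ)/2)^N) atTop (𝓝 0) :=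
        tendsto_pow_atTop_nhds_zero_of_lt_one (by norm_num) (by norm_num)
      have := (h0.const_mul 2).div_const β
      simpa using this
  obtain ⟨s, hs⟩ := cauchySeq_tendsto_of_complete hcauchy
  have hsS : ∀ n, s ∈ S (x n) := by
    intro n
    refine (hSclosed (x n)).mem_of_tendsto hs ?_
    filter_upwards [eventually_ge_atTop n] with mm hmm
    exact hmemle n (mm+1) (by omega)
  have hx0 : x 0 = u := rfl
  refine ⟨s, by have := hsS 0; rwa [hx0] at this, ?_⟩
  intro y hy
  by_contra hcon
  push_neg at hcon
  have hyS : y ∈ S s := hcon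
  have hyn : ∀ n, y ∈ S (x (n+1)) := fun n => hSmono _ _ (hsS (n+1)) hyS
  have hdist : Tendsto (fun n => dist (x (n+1)) y) atTop (𝓝 0) := by
    apply squeeze_zero (fun n => dist_nonneg)
      (g := fun n => ((1:ℝ)/2)^n / β)
    · intro n
      rw [dist_comm]
      exact keyd n y (hyn n)
    · have h0 : Tendsto (fun N : ℕ => ((1:ℝ)/2)^N) atTop (𝓝 0) :=
        tendsto_pow_atTop_nhds_zero_of_lt_one (by norm_num) (by norm_num)
      simpa using h0.div_const β
  have hty : Tendsto (fun n => x (n+1)) atTop (𝓝 y) :=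
    tendsto_iff_dist_tendsto_zero.mpr hdist
  exact hy (tendsto_nhds_unique hty hs)

theorem stmt3 {E : Type*} [NormedAddCommGroup E] [NormedSpace ℝ E] [CompleteSpace E]
    (W : WeakSubdiff E) (g : E → EReal)
    (hproper : ∃ x, g x ≠ ⊤) (hnotbot : ∀ x, g x ≠ ⊥)
    (hlsc : LowerSemicontinuous g)
    (α β : ℝ) (hα : 0 < α) (hβ : 0 < β)
    (u : E) (hu : g u ≠ ⊤)
    (hbound : g u ≤ (⨅ x : E, g x) + ((α * β : ℝ) : EReal)) :
    ∃ (s : E) (x' : StrongDual ℝ E), x' ∈ W.sd g s ∧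
      ‖s - u‖ ≤ α ∧ g s ≤ g u ∧ ‖x'‖ ≤ β := by
  classical
  set I : EReal := ⨅ x : E, g x with hI
  have hIle : ∀ x, I ≤ g x := fun x => iInf_le _ x
  have hInetop : I ≠ ⊤ := ne_top_of_le_ne_top hu (hIle u)
  have hInebot : I ≠ ⊥ := by
    intro h
    rw [h] at hbound
    simp only [EReal.bot_add, le_bot_iff] at hbound
    exact hnotbot u hbound
  set f : E → ℝ := fun x => (min (g x) (g u)).toReal with hf
  have hfin : ∀ x, min (g x) (g u) ≠ ⊤ ∧ min (g x) (g u) ≠ ⊥ := by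
    intro x
    constructor
    · exact ne_top_of_le_ne_top hu (min_le_right _ _)
    · exact ((lt_min (bot_lt_iff_ne_bot.2 (hnotbot x)) (bot_lt_iff_ne_bot.2 (hnotbot u))).ne')
  have hcoe : ∀ x, ((f x : ℝ) : EReal) = min (g x) (g u) := fun x =>
    EReal.coe_toReal (hfin x).1 (hfin x).2
  have hflsc : LowerSemicontinuous f := by
    intro x y hy
    have h1 : (y : EReal) < min (g x) (g u) := by
      rw [← hcoe x]; exact_mod_cast hy
    have h2 : (y : EReal) < g x := h1.trans_le (min_le_left _ _)
    filter_upwards [hlsc x y h2] with z hz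
    have h3 : (y : EReal) < min (g z) (g u) := lt_min hz (h1.trans_le (min_le_right _ _))
    have h4 : (y : EReal) < ((f z : ℝ) : EReal) := by rw [hcoe z]; exact h3
    exact_mod_cast h4
  have hmf : ∀ x, I.toReal ≤ f x := fun x =>
    EReal.toReal_le_toReal (le_min (hIle x) (hIle u)) hInebot (hfin x).1
  have hfu : f u = (g u).toReal := by simp only [hf, min_self]
  obtain ⟨s, hs1, hs2⟩ := my_ekeland hflsc hmf hβ u
  -- distance bound
  have hgu_le : (g u).toReal ≤ I.toReal + α * β := by
    have h1 := EReal.toReal_le_toReal hbound (hnotbot u)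
      (EReal.add_lt_top hInetop (EReal.coe_ne_top _)).ne
    rwa [EReal.toReal_add hInetop hInebot (EReal.coe_ne_top _) (EReal.coe_ne_bot _),
      EReal.toReal_coe] at h1
  have hd : dist s u ≤ α := by
    have h1 : β * dist s u ≤ α * β := by
      rw [hfu] at hs1
      have := hmf s
      linarith
    nlinarith
  -- g s is finite and equals f s
  have hgs : g s = ((f s : ℝ) : EReal) := by
    rcases eq_or_ne s u with rfl | hne
    · rw [hcoe s, min_self]
    · have hlt : f s < f u := by
        have hpos : 0 < dist s u := dist_pos.2 hne
        nlinarith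
      rw [hfu] at hlt
      have h1 : min (g s) (g u) < g u := by
        rw [← hcoe s]
        calc ((f s : ℝ) : EReal) < (((g u).toReal : ℝ) : EReal) := by exact_mod_cast hlt
          _ = g u := EReal.coe_toReal hu (hnotbot u)
      have h2 : g s < g u := by
        by_contra hcon
        push_neg at hcon
        rw [min_eq_right hcon] at h1
        exact lt_irrefl _ h1
      rw [hcoe s, min_eq_left h2.le]
  have hgsu : g s ≤ g u := by
    have h1 : f s ≤ f u := by nlinarith [dist_nonneg (x := s) (y := u)]
    rw [hgs]
    calc ((f s : ℝ) : EReal) ≤ ((f u : ℝ) : EReal) := by exact_mod_cast h1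
      _ = g u := by rw [hfu]; exact EReal.coe_toReal hu (hnotbot u)
  have hgstop : g s ≠ ⊤ := by rw [hgs]; exact EReal.coe_ne_top _
  -- the convex perturbation
  set h : E → ℝ := fun z => β * ‖z - s‖ with hh
  have hhs : h s = 0 := by simp [hh]
  have hhcont : Continuous h :=
    continuous_const.mul ((continuous_id.sub continuous_const).norm)
  have hhconv : ConvexOn ℝ Set.univ h := by
    refine ⟨convex_univ, fun p _ q _ a b ha hb hab => ?_⟩
    have hs' : s = a • s + b • s := by rw [← add_smul, hab, one_smul]
    have heq : a • p + b • q - s = a • (p - s) + b • (q - s) := by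
      rw [smul_sub, smul_sub]
      nth_rewrite 1 [hs']
      abel
    simp only [hh]
    rw [heq]
    have hle : ‖a • (p - s) + b • (q - s)‖ ≤ a * ‖p - s‖ + b * ‖q - s‖ := by
      calc ‖a • (p - s) + b • (q - s)‖ ≤ ‖a • (p - s)‖ + ‖b • (q - s)‖ := norm_add_le _ _
        _ = a * ‖p - s‖ + b * ‖q - s‖ := by
            rw [norm_smul, norm_smul, Real.norm_eq_abs, Real.norm_eq_abs,
              abs_of_nonneg ha, abs_of_nonneg hb]
    simp only [smul_eq_mul]
    nlinarith [mul_le_mul_of_nonneg_left hle hβ.le]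
  -- strict global minimum of the perturbed function at s
  have hFne : ∀ z, g z + ((h z : ℝ) : EReal) ≠ ⊥ := by
    intro z
    rw [Ne, EReal.add_eq_bot_iff]
    push_neg
    exact ⟨hnotbot z, EReal.coe_ne_bot _⟩
  have hFs : g s + ((h s : ℝ) : EReal) = g s := by
    rw [hhs]; simp
  have hFprop : ∃ z, g z + ((h z : ℝ) : EReal) ≠ ⊤ := ⟨s, by rw [hFs]; exact hgstop⟩
  have hFlsc : LowerSemicontinuous (fun z => g z + ((h z : ℝ) : EReal)) := by
    apply hlsc.add'
    · exact (continuous_coe_real_ereal.comp hhcont).lowerSemicontinuous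
    · intro z
      exact EReal.continuousAt_add (Or.inr (EReal.coe_ne_bot _)) (Or.inr (EReal.coe_ne_top _))
  have hstrict : ∀ y : E, y ≠ s →
      g s + ((h s : ℝ) : EReal) < g y + ((h y : ℝ) : EReal) := by
    intro y hy
    rw [hFs]
    rcases eq_or_ne (g y) ⊤ with htop | htop
    · rw [htop, EReal.top_add_of_ne_bot (EReal.coe_ne_bot _)]
      exact lt_of_le_of_ne le_top hgstop
    · have h1 : f s < f y + h y := by
        have := hs2 y hy
        rw [dist_eq_norm] at this
        simpa [hh] using this
      have hcy : ((f y : ℝ) : EReal) ≤ g y := by rw [hcoe y]; exact min_le_left _ _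
      calc g s = ((f s : ℝ) : EReal) := hgs
        _ < ((f y + h y : ℝ) : EReal) := by exact_mod_cast h1
        _ = ((f y : ℝ) : EReal) + ((h y : ℝ) : EReal) := EReal.coe_add _ _
        _ ≤ g y + ((h y : ℝ) : EReal) := add_le_add_left hcy _
  have h0 : (0 : StrongDual ℝ E) ∈ W.sd (fun z => g z + ((h z : ℝ) : EReal)) s :=
    W.zero_mem _ hFprop hFne hFlsc s hstrict
  have hsub := W.sum_rule g hproper hnotbot hlsc h hhcont hhconv s h0
  rw [Set.mem_add] at hsub
  obtain ⟨a, ha, b, hb, hab⟩ := hsub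
  have haeq : a = -b := eq_neg_of_add_eq_zero_left hab
  have hbnorm : ‖b‖ ≤ β := by
    apply ContinuousLinearMap.opNorm_le_bound _ hβ.le
    intro v
    have h1 : b v ≤ β * ‖v‖ := by
      have := hb (s + v)
      simp only [hh, add_sub_cancel_left, sub_self, norm_zero, mul_zero, zero_add] at this
      exact this
    have h2 : -(b v) ≤ β * ‖v‖ := by
      have := hb (s - v)
      simp only [hh, sub_sub_cancel_left, sub_self, norm_zero, mul_zero, zero_add,
        map_neg, norm_neg] at this
      simpa using this
    rw [Real.norm_eq_abs]
    exact abs_le.2 ⟨by linarith, h1⟩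
  refine ⟨s, a, ha, ?_, hgsu, ?_⟩
  · rw [← dist_eq_norm]; exact hd
  · rw [haeq, norm_neg]; exact hbnorm
end

section
/- (Brøndsted–Rockafellar property for weak subdifferentials) Let E be a real Banach space, ∂_w a weak subdifferential, α, β > 0, f : E → ]−∞,+∞] proper and lower semicontinuous, and (u, u*) ∈ E × E* with f(u) + f*(u*) ≤ ⟨u, u*⟩ + αβ. Then there exists (s, s*) ∈ gra ∂_w f such that ‖s − u‖ ≤ α, ‖s* − u*‖ ≤ β, and f(s) − ⟨s, u*⟩ ≤ f(u) − ⟨u, u*⟩. -/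
open Pointwise Filter Topology

/-- The Fenchel conjugate of `f : E → ]-∞,+∞]`. -/
noncomputable def fenchel {E : Type*} [NormedAddCommGroup E] [NormedSpace ℝ E]
    (f : E → EReal) (x' : StrongDual ℝ E) : EReal :=
  ⨆ x : E, ((x' x : EReal) - f x)


/-- A finiteness helper. -/
lemma ereal_fin {v : EReal} (h1 : v ≠ ⊥) (h2 : v ≠ ⊤) : ∃ r : ℝ, v = (r : EReal) :=
  ⟨v.toReal, (EReal.coe_toReal h2 h1).symm⟩

/-- Ekeland's variational principle, EReal version with strict minimality. -/
lemma ekelandE {X : Type*} [MetricSpace X] [CompleteSpace X]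
    (g : X → EReal) (hlsc : LowerSemicontinuous g) (m : ℝ)
    (hm : ∀ x, (m : EReal) ≤ g x) (β ε : ℝ) (hβ : 0 < β) (hε : 0 < ε)
    (u : X) (hu : g u ≤ ((m + ε : ℝ) : EReal)) :
    ∃ s : X, g s ≤ g u ∧ dist s u ≤ ε / β ∧
      ∀ y, y ≠ s → g s < g y + ((β * dist y s : ℝ) : EReal) := by
  set R : X → X → Prop := fun y x => g y + ((β * dist y x : ℝ) : EReal) ≤ g x with hR
  have hfin : ∀ {x : X}, g x ≠ ⊤ → ∃ r : ℝ, g x = (r : EReal) := by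
    intro x hx
    exact ereal_fin (fun h => by simpa [h] using (hm x).trans_eq h) hx
  have hRrefl : ∀ x, R x x := by
    intro x; simp [hR, dist_self]
  have hRtrans : ∀ x y z : X, R z y → R y x → R z x := by
    intro x y z h1 h2
    have tri : (β * dist z x : ℝ) ≤ β * dist z y + β * dist y x := by
      rw [← mul_add]
      exact mul_le_mul_of_nonneg_left (dist_triangle z y x) hβ.le
    calc g z + ((β * dist z x : ℝ) : EReal)
        ≤ g z + ((β * dist z y + β * dist y x : ℝ) : EReal) := by
          exact add_le_add_right (EReal.coe_le_coe_iff.2 tri) _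
      _ = (g z + ((β * dist z y : ℝ) : EReal)) + ((β * dist y x : ℝ) : EReal) := by
          rw [EReal.coe_add, add_assoc]
      _ ≤ g y + ((β * dist y x : ℝ) : EReal) := add_le_add_left h1 _
      _ ≤ g x := h2
  -- key selection step
  have key : ∀ (x : X) (δ : ℝ), 0 < δ →
      ∃ y, R y x ∧ ∀ z, R z x → g y ≤ g z + (δ : EReal) := by
    intro x δ hδ
    by_cases htop : (⨅ z : {z : X // R z x}, g (z : X)) = ⊤
    · refine ⟨x, hRrefl x, fun z hz => ?_⟩
      have : g z = ⊤ := by simpa using (iInf_eq_top.1 htop ⟨z, hz⟩)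
      rw [this, EReal.top_add_coe]
      exact le_top
    · set I := ⨅ z : {z : X // R z x}, g (z : X) with hI
      have hIm : (m : EReal) ≤ I := le_iInf fun z => hm z
      have hIbot : I ≠ ⊥ := ((EReal.bot_lt_coe m).trans_le hIm).ne'
      obtain ⟨r, hr⟩ := ereal_fin hIbot htop
      have hlt : I < I + (δ : EReal) := by
        rw [hr, ← EReal.coe_add]
        exact_mod_cast (lt_add_of_pos_right r hδ)
      obtain ⟨⟨z, hz⟩, hzlt⟩ := iInf_lt_iff.1 hlt
      refine ⟨z, hz, fun w hw => hzlt.le.trans (add_le_add_left ?_ _)⟩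
      exact iInf_le (fun z : {z : X // R z x} => g (z : X)) ⟨w, hw⟩
  have key' : ∀ (x : X) (n : ℕ), ∃ y, R y x ∧
      ∀ z, R z x → g y ≤ g z + (((1/2 : ℝ) ^ (n+1) : ℝ) : EReal) :=
    fun x n => key x ((1/2) ^ (n+1)) (by positivity)
  choose next hnext₁ hnext₂ using key'
  set seq : ℕ → X := fun n => Nat.rec u (fun n xn => next xn n) n with hseq
  have hseq0 : seq 0 = u := rfl
  have hseqS : ∀ n, seq (n+1) = next (seq n) n := fun n => rfl
  have hstep : ∀ n, R (seq (n+1)) (seq n) := fun n => hnext₁ (seq n) n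
  have hminn : ∀ n z, R z (seq n) →
      g (seq (n+1)) ≤ g z + (((1/2 : ℝ) ^ (n+1) : ℝ) : EReal) :=
    fun n z hz => hnext₂ (seq n) n z hz
  have hchain : ∀ n k, R (seq (n+k)) (seq n) := by
    intro n k
    induction k with
    | zero => exact hRrefl _
    | succ k ih => exact hRtrans _ _ _ (hstep (n+k)) ih
  have hchain' : ∀ {n m' : ℕ}, n ≤ m' → R (seq m') (seq n) := by
    intro n m' h
    obtain ⟨k, rfl⟩ := Nat.exists_eq_add_of_le h
    exact hchain n k
  -- all values finite
  have hgseq_le : ∀ n, g (seq n) ≤ g u := by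
    intro n
    have h1 := hchain' (Nat.zero_le n)
    rw [hseq0] at h1
    calc g (seq n) ≤ g (seq n) + ((β * dist (seq n) u : ℝ) : EReal) :=
          le_add_of_nonneg_right (by exact_mod_cast mul_nonneg hβ.le dist_nonneg)
      _ ≤ g u := h1
  have hgseq_ne_top : ∀ n, g (seq n) ≠ ⊤ := by
    intro n
    exact ((hgseq_le n).trans_lt ((hu.trans_lt (EReal.coe_lt_top _)))).ne
  choose a ha using fun n => hfin (hgseq_ne_top n)
  have ham : ∀ n, m ≤ a n := by
    intro n
    have := hm (seq n); rw [ha n] at this; exact_mod_cast this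
  have hau : a 0 ≤ m + ε := by
    have := hu; rw [← hseq0, ha 0] at this; exact_mod_cast this
  have hreal : ∀ {n m' : ℕ}, n ≤ m' → a m' + β * dist (seq m') (seq n) ≤ a n := by
    intro n m' h
    have := hchain' h
    rw [hR] at this
    rw [ha n, ha m', ← EReal.coe_add] at this
    exact_mod_cast this
  have hanti : ∀ {n m' : ℕ}, n ≤ m' → a m' ≤ a n := by
    intro n m' h
    have := hreal h
    nlinarith [dist_nonneg (x := seq m') (y := seq n)]
  -- limit of a
  have hbdd : BddBelow (Set.range a) := ⟨m, by rintro _ ⟨n, rfl⟩; exact ham n⟩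
  set L := ⨅ n, a n with hL
  have haL : Tendsto a atTop (𝓝 L) :=
    tendsto_atTop_ciInf (fun i j h => hanti h) hbdd
  have hLle : ∀ n, L ≤ a n := fun n => ciInf_le hbdd n
  -- Cauchy
  have hcauchy : CauchySeq seq := by
    apply cauchySeq_of_le_tendsto_0 (fun N => (a N - L) / β)
    · intro n m' N hn hm'
      rcases le_total n m' with h | h
      · have h3 := hreal h
        have h1 : a n ≤ a N := hanti hn
        have h2 : L ≤ a m' := hLle m'
        rw [dist_comm, le_div_iff₀ hβ, mul_comm]
        nlinarith
      · have h3 := hreal h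
        have h1 : a m' ≤ a N := hanti hm'
        have h2 : L ≤ a n := hLle n
        rw [le_div_iff₀ hβ, mul_comm]
        nlinarith
    · have : Tendsto (fun N => a N - L) atTop (𝓝 (L - L)) :=
        haL.sub tendsto_const_nhds
      rw [sub_self] at this
      simpa using this.div_const β
  obtain ⟨s, hs⟩ := cauchySeq_tendsto_of_complete hcauchy
  -- g s ≤ L
  have hgsL : g s ≤ (L : EReal) := by
    by_contra hcon
    push_neg at hcon
    obtain ⟨c, hc1, hc2⟩ := EReal.exists_between_coe_real hcon
    have hev : ∀ᶠ n in atTop, (c : EReal) < g (seq n) :=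
      hs.eventually (hlsc s (c : EReal) hc2)
    have : c ≤ L := by
      apply ge_of_tendsto haL
      filter_upwards [hev] with n hn
      rw [ha n] at hn
      exact_mod_cast hn.le
    exact absurd hc1 (not_lt.2 (by exact_mod_cast this))
  have hgs_ne_top : g s ≠ ⊤ :=
    (hgsL.trans_lt (EReal.coe_lt_top _)).ne
  obtain ⟨gs, hgs⟩ := hfin hgs_ne_top
  have hgsL' : gs ≤ L := by rw [hgs] at hgsL; exact_mod_cast hgsL
  -- R s (seq n)
  have hRs : ∀ n, R s (seq n) := by
    intro n
    have hlim : Tendsto (fun m' => a m' + β * dist (seq m') (seq n)) atTop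
        (𝓝 (L + β * dist s (seq n))) :=
      haL.add (((hs.dist tendsto_const_nhds)).const_mul β)
    have hle : L + β * dist s (seq n) ≤ a n := by
      apply le_of_tendsto hlim
      filter_upwards [eventually_ge_atTop n] with m' hm'
      exact hreal hm'
    show g s + ((β * dist s (seq n) : ℝ) : EReal) ≤ g (seq n)
    rw [hgs, ha n, ← EReal.coe_add]
    exact_mod_cast le_trans (by nlinarith) hle
  have hR0 : R s u := by have := hRs 0; rwa [hseq0] at this
  have hgsu : g s ≤ g u := by
    calc g s ≤ g s + ((β * dist s u : ℝ) : EReal) :=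
          le_add_of_nonneg_right (by exact_mod_cast mul_nonneg hβ.le dist_nonneg)
      _ ≤ g u := hR0
  refine ⟨s, hgsu, ?_, ?_⟩
  · -- dist bound
    have h1 : (gs + β * dist s u : ℝ) ≤ (m + ε : ℝ) := by
      have := hR0
      rw [hR, hgs, ← hseq0, ha 0, ← EReal.coe_add] at this
      have h2 : (gs + β * dist s u : ℝ) ≤ a 0 := by exact_mod_cast this
      linarith
    have hmgs : m ≤ gs := by
      have := hm s; rw [hgs] at this; exact_mod_cast this
    rw [le_div_iff₀ hβ, mul_comm]
    linarith
  · -- strict minimality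
    intro y hy
    by_contra hcon
    push_neg at hcon
    have hRy : R y s := hcon
    have hgy_ne_top : g y ≠ ⊤ := by
      intro h
      rw [hR, h] at hRy
      rw [EReal.top_add_coe] at hRy
      exact absurd (top_le_iff.1 hRy) hgs_ne_top
    obtain ⟨gy, hgy⟩ := hfin hgy_ne_top
    have hRyn : ∀ n, R y (seq n) := fun n => hRtrans _ _ _ hRy (hRs n)
    have hd : ∀ n, dist y (seq (n+1)) ≤ (1/2 : ℝ) ^ (n+1) / β := by
      intro n
      have h1 := hminn n y (hRyn n)
      have h2 := hRyn (n+1)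
      rw [hR, hgy, ha (n+1), ← EReal.coe_add] at h2
      rw [ha (n+1), hgy, ← EReal.coe_add] at h1
      have h1' : a (n+1) ≤ gy + (1/2 : ℝ) ^ (n+1) := by exact_mod_cast h1
      have h2' : gy + β * dist y (seq (n+1)) ≤ a (n+1) := by exact_mod_cast h2
      rw [le_div_iff₀ hβ, mul_comm]
      linarith
    have htend : Tendsto (fun n => seq (n+1)) atTop (𝓝 y) := by
      rw [tendsto_iff_dist_tendsto_zero]
      refine squeeze_zero (g := fun n => (1/2 : ℝ) ^ (n+1) / β)
        (fun n => dist_nonneg) (fun n => ?_) ?_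
      · rw [dist_comm]; exact hd n
      have h0 : Tendsto (fun n : ℕ => (1/2 : ℝ) ^ n) atTop (𝓝 0) :=
        tendsto_pow_atTop_nhds_zero_of_lt_one (by norm_num) (by norm_num)
      have h1 : Tendsto (fun n : ℕ => (1/2 : ℝ) ^ (n+1)) atTop (𝓝 0) := by
        have := h0.comp (tendsto_add_atTop_nat 1)
        simpa [Function.comp_def] using this
      simpa using h1.div_const β
    have htend2 : Tendsto (fun n => seq (n+1)) atTop (𝓝 s) :=
      hs.comp (tendsto_add_atTop_nat 1)
    exact hy (tendsto_nhds_unique htend htend2)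

theorem stmt4 {E : Type*} [NormedAddCommGroup E] [NormedSpace ℝ E] [CompleteSpace E]
    (W : WeakSubdiff E) (α β : ℝ) (hα : 0 < α) (hβ : 0 < β)
    (f : E → EReal) (hproper : ∃ x, f x ≠ ⊤) (hnotbot : ∀ x, f x ≠ ⊥)
    (hlsc : LowerSemicontinuous f)
    (u : E) (u' : StrongDual ℝ E)
    (hbound : f u + fenchel f u' ≤ ((u' u : EReal) + ((α * β : ℝ) : EReal))) :
    ∃ (s : E) (s' : StrongDual ℝ E), s' ∈ W.sd f s ∧
      ‖s - u‖ ≤ α ∧ ‖s' - u'‖ ≤ β ∧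
      f s - (u' s : EReal) ≤ f u - (u' u : EReal) := by
  obtain ⟨x₀, hx₀⟩ := hproper
  -- finiteness of the ingredients
  have hFbot : fenchel f u' ≠ ⊥ := by
    obtain ⟨r₀, hr₀⟩ := ereal_fin (hnotbot x₀) hx₀
    have h1 : ((u' x₀ - r₀ : ℝ) : EReal) ≤ fenchel f u' := by
      have := le_iSup (fun x => ((u' x : EReal) - f x)) x₀
      rwa [hr₀, ← EReal.coe_sub] at this
    exact fun h => absurd h1 (by rw [h]; exact (EReal.bot_lt_coe _).not_ge)
  have hfu_ne_top : f u ≠ ⊤ := by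
    intro h
    rw [h, EReal.top_add_of_ne_bot hFbot, ← EReal.coe_add] at hbound
    exact absurd (top_le_iff.1 hbound) (EReal.coe_ne_top _)
  have hF_ne_top : fenchel f u' ≠ ⊤ := by
    intro h
    rw [h, EReal.add_top_iff_ne_bot.2 (hnotbot u), ← EReal.coe_add] at hbound
    exact absurd (top_le_iff.1 hbound) (EReal.coe_ne_top _)
  obtain ⟨F₀, hF₀⟩ := ereal_fin hFbot hF_ne_top
  obtain ⟨fu, hfu⟩ := ereal_fin (hnotbot u) hfu_ne_top
  set g : E → EReal := fun x => f x + ((-(u' x) : ℝ) : EReal) with hg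
  have hglsc : LowerSemicontinuous g :=
    hlsc.add' ((continuous_coe_real_ereal.comp u'.continuous.neg).lowerSemicontinuous)
      (fun x => EReal.continuousAt_add (Or.inr (EReal.coe_ne_bot _))
        (Or.inr (EReal.coe_ne_top _)))
  have hmlb : ∀ x, ((-F₀ : ℝ) : EReal) ≤ g x := by
    intro x
    by_cases hx : f x = ⊤
    · show _ ≤ f x + _
      rw [hx, EReal.top_add_coe]
      exact le_top
    · obtain ⟨fx, hfx⟩ := ereal_fin (hnotbot x) hx
      have h1 : ((u' x - fx : ℝ) : EReal) ≤ fenchel f u' := by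
        have := le_iSup (fun x => ((u' x : EReal) - f x)) x
        rwa [hfx, ← EReal.coe_sub] at this
      rw [hF₀] at h1
      have h2 : u' x - fx ≤ F₀ := by exact_mod_cast h1
      show _ ≤ f x + _
      rw [hfx, ← EReal.coe_add]
      exact_mod_cast (by linarith : -F₀ ≤ fx + -(u' x))
  have hgu : g u ≤ ((-F₀ + α * β : ℝ) : EReal) := by
    rw [hfu, hF₀, ← EReal.coe_add, ← EReal.coe_add] at hbound
    have h1 : fu + F₀ ≤ u' u + α * β := by exact_mod_cast hbound
    show f u + _ ≤ _
    rw [hfu, ← EReal.coe_add]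
    exact_mod_cast (by linarith : fu + -(u' u) ≤ -F₀ + α * β)
  obtain ⟨s, hs1, hs2, hs3⟩ := ekelandE g hglsc (-F₀) hmlb β (α * β) hβ
    (by positivity) u hgu
  have hdist : ‖s - u‖ ≤ α := by
    rw [← dist_eq_norm]
    calc dist s u ≤ (α * β) / β := hs2
    _ = α := by field_simp
  have hgs_ne_top : g s ≠ ⊤ :=
    (hs1.trans_lt (hgu.trans_lt (EReal.coe_lt_top _))).ne
  -- the perturbation function
  set h : E → ℝ := fun x => β * ‖x - s‖ - u' x with hh
  have hcont : Continuous h :=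
    (continuous_const.mul ((continuous_id.sub continuous_const).norm)).sub u'.continuous
  have hn1 : ConvexOn ℝ Set.univ (fun x : E => ‖x - s‖) := by
    refine ⟨convex_univ, fun x _ y _ a b ha hb hab => ?_⟩
    have e : a • (x - s) + b • (y - s) = a • x + b • y - (a + b) • s := by
      rw [smul_sub, smul_sub, add_smul]; abel
    rw [hab, one_smul] at e
    show ‖a • x + b • y - s‖ ≤ a • ‖x - s‖ + b • ‖y - s‖
    rw [← e]
    calc ‖a • (x - s) + b • (y - s)‖ ≤ ‖a • (x - s)‖ + ‖b • (y - s)‖ := norm_add_le _ _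
      _ = a • ‖x - s‖ + b • ‖y - s‖ := by
          rw [norm_smul, norm_smul, Real.norm_of_nonneg ha, Real.norm_of_nonneg hb]
          simp [smul_eq_mul]
  have hconv : ConvexOn ℝ Set.univ h := by
    have h2 : ConvexOn ℝ Set.univ (fun x : E => β * ‖x - s‖) := by
      simpa [smul_eq_mul] using hn1.smul hβ.le
    have h3 : ConvexOn ℝ Set.univ (fun x : E => -(u' x)) := by
      refine ⟨convex_univ, fun x _ y _ a b ha hb hab => ?_⟩
      simp only [map_add, map_smul, smul_eq_mul]
      exact le_of_eq (by ring)
    simpa [hh, sub_eq_add_neg, Pi.add_def] using h2.add h3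
  set F : E → EReal := fun z => f z + ((h z : ℝ) : EReal) with hF
  have hFeq : ∀ y, F y = g y + ((β * ‖y - s‖ : ℝ) : EReal) := by
    intro y
    show f y + _ = (f y + _) + _
    rw [add_assoc, ← EReal.coe_add]
    congr 1
    exact congrArg _ (by rw [hh]; ring)
  have hFs : F s = g s := by rw [hFeq s]; simp
  have hstrict : ∀ y, y ≠ s → F s < F y := by
    intro y hy
    have h1 := hs3 y hy
    rw [dist_eq_norm] at h1
    rw [hFs, hFeq y]
    exact h1
  have hFproper : ∃ x, F x ≠ ⊤ := ⟨s, by rw [hFs]; exact hgs_ne_top⟩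
  have hFnotbot : ∀ x, F x ≠ ⊥ := by
    intro x hx
    rcases EReal.add_eq_bot_iff.1 hx with h | h
    · exact hnotbot x h
    · exact EReal.coe_ne_bot _ h
  have hFlsc : LowerSemicontinuous F :=
    hlsc.add' ((continuous_coe_real_ereal.comp hcont).lowerSemicontinuous)
      (fun x => EReal.continuousAt_add (Or.inr (EReal.coe_ne_bot _))
        (Or.inr (EReal.coe_ne_top _)))
  have h0 : (0 : StrongDual ℝ E) ∈ W.sd F s :=
    W.zero_mem F hFproper hFnotbot hFlsc s hstrict
  have hmem : (0 : StrongDual ℝ E) ∈ W.sd f s + convSubdiff h s :=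
    W.sum_rule f ⟨x₀, hx₀⟩ hnotbot hlsc h hcont hconv s h0
  rw [Set.mem_add] at hmem
  obtain ⟨s', hs', z, hz, hsum⟩ := hmem
  have hz' : s' = -z := eq_neg_of_add_eq_zero_left hsum
  have hb : ∀ v : E, (z + u') v ≤ β * ‖v‖ := by
    intro v
    have h1 := hz (v + s)
    simp only [hh, add_sub_cancel_right, sub_self, norm_zero, mul_zero, zero_sub,
      map_add] at h1
    rw [ContinuousLinearMap.add_apply]
    linarith
  have hnorm : ‖s' - u'‖ ≤ β := by
    have hzu : ‖z + u'‖ ≤ β := by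
      refine ContinuousLinearMap.opNorm_le_bound _ hβ.le fun v => ?_
      rw [Real.norm_eq_abs]
      refine abs_le.2 ⟨?_, hb v⟩
      have h2 := hb (-v)
      rw [map_neg, norm_neg] at h2
      linarith
    rw [hz', show -z - u' = -(z + u') by abel, norm_neg]
    exact hzu
  refine ⟨s, s', hs', hdist, hnorm, ?_⟩
  rw [sub_eq_add_neg, sub_eq_add_neg, ← EReal.coe_neg, ← EReal.coe_neg]
  exact hs1
end

section
/- Let E be a real Banach space, ∂_w a weak subdifferential, and f : E → ]−∞,+∞] proper, lower semicontinuous, and with insignificant downside. Then gra ∂_w f is stably r_L-dense in E × E*: for every (y,y*) ∈ E × E* there exists M ≥ 0 such that inf{ r_L(s − y, s* − y*) : (s,s*) ∈ gra ∂_w f, ‖s − y‖ ≤ M, ‖s* − y*‖ ≤ M } = 0. -/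
open Pointwise

/-- `r_L(x, x*) = ½‖x‖² + ½‖x*‖² + ⟨x, x*⟩`. -/
noncomputable def rL {E : Type*} [NormedAddCommGroup E] [NormedSpace ℝ E]
    (x : E) (x' : StrongDual ℝ E) : ℝ :=
  1 / 2 * ‖x‖ ^ 2 + 1 / 2 * ‖x'‖ ^ 2 + x' x

/-- `A ⊆ E × E*` is stably `r_L`-dense if for every `(y, y*)` there is `M ≥ 0` such that
the infimum of `r_L(s - y, s* - y*)` over `(s, s*) ∈ A` with `‖s - y‖ ≤ M` and
`‖s* - y*‖ ≤ M` is `0` (since `r_L ≥ 0`, this means for every `ε > 0` there is such a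
point with `r_L` value `< ε`). -/
def StablyRLDense {E : Type*} [NormedAddCommGroup E] [NormedSpace ℝ E]
    (A : Set (E × StrongDual ℝ E)) : Prop :=
  ∀ (y : E) (y' : StrongDual ℝ E), ∃ M : ℝ, 0 ≤ M ∧
    ∀ ε > (0 : ℝ), ∃ p ∈ A, ‖p.1 - y‖ ≤ M ∧ ‖p.2 - y'‖ ≤ M ∧
      rL (p.1 - y) (p.2 - y') < ε

/-- `f` has insignificant downside: `f(x) ≥ -a₀‖x‖² - b₀‖x‖ - c₀` with `a₀ < ½`. -/
def InsigDownside {E : Type*} [NormedAddCommGroup E] [NormedSpace ℝ E]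
    (f : E → EReal) : Prop :=
  ∃ a₀ b₀ c₀ : ℝ, a₀ < 1 / 2 ∧
    ∀ x : E, ((-a₀ * ‖x‖ ^ 2 - b₀ * ‖x‖ - c₀ : ℝ) : EReal) ≤ f x

open Filter Topology
lemma my_ekeland_s5 {E : Type*} [MetricSpace E] [CompleteSpace E]
    (G : E → ℝ) (hG : LowerSemicontinuous G) (B : ℝ) (hB : ∀ x, B ≤ G x)
    (ε : ℝ) (hε : 0 < ε) (x₀ : E) :
    ∃ xb : E, (G xb + ε * dist xb x₀ ≤ G x₀) ∧
      ∀ z, z ≠ xb → G xb - ε * dist z xb < G z := by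
  classical
  set S : E → Set E := fun x => {z | G z + ε * dist z x ≤ G x} with hS
  have hself : ∀ x, x ∈ S x := by intro x; simp [hS]
  have htrans : ∀ {x z w : E}, z ∈ S x → w ∈ S z → w ∈ S x := by
    intro x z w hz hw
    simp only [hS, Set.mem_setOf_eq] at *
    have := dist_triangle w z x
    nlinarith
  have hclosed : ∀ x, IsClosed (S x) := by
    intro x
    have h1 : LowerSemicontinuous fun z => G z + ε * dist z x :=
      hG.add ((continuous_const.mul (Continuous.dist continuous_id
        continuous_const)).lowerSemicontinuous)
    exact h1.isClosed_preimage (G x)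
  have hne : ∀ x, (G '' S x).Nonempty := fun x => ⟨G x, x, hself x, rfl⟩
  have hbdd : ∀ x, BddBelow (G '' S x) := fun x => ⟨B, by rintro _ ⟨z, _, rfl⟩; exact hB z⟩
  have hstep : ∀ (x : E) (n : ℕ), ∃ z, z ∈ S x ∧ G z ≤ sInf (G '' S x) + (1/2)^n := by
    intro x n
    have hpos : (0:ℝ) < (1/2)^n := by positivity
    obtain ⟨a, ⟨z, hzS, rfl⟩, hlt⟩ := exists_lt_of_csInf_lt (hne x)
      (by linarith : sInf (G '' S x) < sInf (G '' S x) + (1/2)^n)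
    exact ⟨z, hzS, hlt.le⟩
  let u : ℕ → E := fun n => Nat.rec x₀ (fun n x => (hstep x n).choose) n
  have huS : ∀ n, u (n+1) ∈ S (u n) := fun n => (hstep (u n) n).choose_spec.1
  have huInf : ∀ n, G (u (n+1)) ≤ sInf (G '' S (u n)) + (1/2)^n :=
    fun n => (hstep (u n) n).choose_spec.2
  have hchain : ∀ n m, n ≤ m → u m ∈ S (u n) := by
    intro n m hnm
    induction m with
    | zero => have h0 : n = 0 := Nat.le_zero.mp hnm; subst h0; exact hself _
    | succ m ih =>
      rcases Nat.lt_or_ge n (m+1) with h | h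
      · exact htrans (ih (Nat.lt_succ_iff.mp h)) (huS m)
      · have : n = m+1 := le_antisymm hnm h
        subst this; exact hself _
  have hmono : ∀ n m, n ≤ m → G (u m) + ε * dist (u m) (u n) ≤ G (u n) :=
    fun n m h => hchain n m h
  have hGanti : Antitone fun n => G (u n) := by
    intro n m h
    have h1 := hmono n m h
    have hd : (0:ℝ) ≤ dist (u m) (u n) := dist_nonneg
    nlinarith
  have hbdd2 : BddBelow (Set.range fun n => G (u n)) :=
    ⟨B, by rintro _ ⟨n, rfl⟩; exact hB _⟩
  set L := ⨅ n, G (u n) with hL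
  have hLtend : Tendsto (fun n => G (u n)) atTop (nhds L) := tendsto_atTop_ciInf hGanti hbdd2
  have hLle : ∀ n, L ≤ G (u n) := fun n => ciInf_le hbdd2 n
  have hcauchy : CauchySeq u := by
    rw [Metric.cauchySeq_iff']
    intro η hη
    obtain ⟨N, hN⟩ := (Metric.tendsto_atTop.mp hLtend) (ε * η) (by positivity)
    refine ⟨N, fun n hn => ?_⟩
    have h1 := hmono N n hn
    have h2 := hN N le_rfl
    rw [Real.dist_eq] at h2
    have habs : G (u N) - L < ε * η := lt_of_abs_lt h2
    have h3 := hLle n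
    nlinarith [dist_nonneg (x := u n) (y := u N)]
  obtain ⟨xb, hxb⟩ := cauchySeq_tendsto_of_complete hcauchy
  have hxbS : ∀ n, xb ∈ S (u n) := by
    intro n
    refine (hclosed (u n)).mem_of_tendsto hxb ?_
    filter_upwards [eventually_ge_atTop n] with m hm using hchain n m hm
  refine ⟨xb, by have h : xb ∈ S x₀ := hxbS 0; simpa [hS] using h, ?_⟩
  intro z hz
  by_contra hcon
  push_neg at hcon
  have hzS : z ∈ S xb := by simp only [hS, Set.mem_setOf_eq]; linarith
  have hzSn : ∀ n, z ∈ S (u n) := fun n => htrans (hxbS n) hzS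
  have hInfle : ∀ n, sInf (G '' S (u n)) ≤ G z := fun n => csInf_le (hbdd _) ⟨z, hzSn n, rfl⟩
  have hd : ∀ n, ε * dist z (u (n+1)) ≤ (1/2)^n := by
    intro n
    have h1 := hzSn (n+1)
    have h2 := huInf n
    have h3 := hInfle n
    simp only [hS, Set.mem_setOf_eq] at h1
    linarith
  have t1 : Tendsto (fun n : ℕ => (1/2:ℝ)^n / ε) atTop (nhds 0) := by
    simpa using (tendsto_pow_atTop_nhds_zero_of_lt_one (r := (1:ℝ)/2) (by norm_num) (by norm_num)).div_const ε
  have t2 : Tendsto (fun n : ℕ => dist (u (n+1)) xb) atTop (nhds 0) :=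
    tendsto_iff_dist_tendsto_zero.mp (hxb.comp (tendsto_add_atTop_nat 1))
  have htd : Tendsto (fun n : ℕ => (1/2:ℝ)^n / ε + dist (u (n+1)) xb) atTop (nhds 0) := by
    simpa using t1.add t2
  have hbound : ∀ n : ℕ, dist z xb ≤ (1/2)^n / ε + dist (u (n+1)) xb := by
    intro n
    have h1 := hd n
    have h2 := dist_triangle z (u (n+1)) xb
    have h3 : dist z (u (n+1)) ≤ (1/2)^n / ε := by
      rw [le_div_iff₀ hε]; linarith
    linarith
  have hzxb : dist z xb ≤ 0 := ge_of_tendsto' htd hbound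
  exact hz (dist_le_zero.mp hzxb)


lemma lsc_min_const {E : Type*} [TopologicalSpace E] {f : E → EReal}
    (hf : LowerSemicontinuous f) (c : EReal) :
    LowerSemicontinuous fun x => min (f x) c := by
  intro x r hr
  simp only [gt_iff_lt, lt_min_iff] at hr
  filter_upwards [hf x r hr.1] with z hz
  exact lt_min hz hr.2

lemma lsc_add_cont {E : Type*} [TopologicalSpace E] {f : E → EReal} (hf : LowerSemicontinuous f)
    {h : E → ℝ} (hh : Continuous h) : LowerSemicontinuous fun z => f z + (h z : EReal) := by
  have hg : LowerSemicontinuous fun z => ((h z : ℝ) : EReal) :=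
    (continuous_coe_real_ereal.comp hh).lowerSemicontinuous
  refine hf.add' hg fun x => ?_
  exact EReal.continuousAt_add (Or.inr (EReal.coe_ne_bot _)) (Or.inr (EReal.coe_ne_top _))

lemma dual_bound {E : Type*} [NormedAddCommGroup E] [NormedSpace ℝ E]
    (q : StrongDual ℝ E) (c : ℝ) (hc : 0 ≤ c) (hq : ∀ w : E, q w ≤ c * ‖w‖) :
    ‖q‖ ≤ c := by
  refine ContinuousLinearMap.opNorm_le_bound q hc fun w => ?_
  rw [Real.norm_eq_abs, abs_le]
  have h2 := hq (-w)
  rw [map_neg, norm_neg] at h2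
  exact ⟨by linarith, hq w⟩

lemma dual_sq {E : Type*} [NormedAddCommGroup E] [NormedSpace ℝ E]
    (v : E) (q : StrongDual ℝ E)
    (hq : ∀ w : E, q (w - v) ≤ 1/2*‖w‖^2 - 1/2*‖v‖^2) :
    ‖v‖^2 ≤ q v ∧ ‖q‖ ≤ ‖v‖ := by
  constructor
  · by_contra hcon
    push_neg at hcon
    set d := ‖v‖^2 - q v with hd
    have hdpos : 0 < d := by simp only [hd]; linarith
    have key : ∀ s : ℝ, 0 < s → s ≤ 1 → d ≤ s/2*‖v‖^2 := by
      intro s hs hs1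
      have h := hq ((1-s) • v)
      rw [show (1-s) • v - v = (-s) • v by module, map_smul] at h
      rw [norm_smul, Real.norm_eq_abs, abs_of_nonneg (by linarith : (0:ℝ) ≤ 1 - s)] at h
      simp only [smul_eq_mul] at h
      nlinarith [sq_nonneg ‖v‖]
    rcases eq_or_lt_of_le (norm_nonneg v) with hv0 | hvpos
    · have := key 1 one_pos le_rfl
      rw [← hv0] at this
      nlinarith
    · have hsq : (0:ℝ) < ‖v‖^2 := by positivity
      have hs1 : (0:ℝ) < min 1 (d/‖v‖^2) := lt_min one_pos (by positivity)
      have := key (min 1 (d/‖v‖^2)) hs1 (min_le_left _ _)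
      have h2 : min 1 (d/‖v‖^2) ≤ d/‖v‖^2 := min_le_right _ _
      have h3 : min 1 (d/‖v‖^2)/2*‖v‖^2 ≤ d/2 := by
        rw [div_mul_eq_mul_div, div_le_div_iff₀ (by norm_num) (by norm_num)]
        calc min 1 (d/‖v‖^2) * ‖v‖^2 * 2 ≤ (d/‖v‖^2) * ‖v‖^2 * 2 := by nlinarith
        _ = d * 2 := by field_simp
      linarith
  · refine dual_bound q ‖v‖ (norm_nonneg v) fun w => ?_
    have key : ∀ t : ℝ, 0 < t → q w ≤ ‖v‖*‖w‖ + t*‖w‖^2/2 := by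
      intro t ht
      have h := hq (t • w + v)
      rw [add_sub_cancel_right, map_smul, smul_eq_mul] at h
      have hn : ‖t • w + v‖ ≤ t*‖w‖ + ‖v‖ := by
        calc ‖t • w + v‖ ≤ ‖t • w‖ + ‖v‖ := norm_add_le _ _
        _ = t*‖w‖ + ‖v‖ := by rw [norm_smul, Real.norm_eq_abs, abs_of_pos ht]
      have hsq : ‖t • w + v‖^2 ≤ (t*‖w‖ + ‖v‖)^2 :=
        pow_le_pow_left₀ (norm_nonneg _) hn 2
      nlinarith [norm_nonneg w, norm_nonneg v]
    by_contra hcon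
    push_neg at hcon
    set d := q w - ‖v‖*‖w‖ with hd
    have hdpos : 0 < d := by simp only [hd]; linarith
    rcases eq_or_lt_of_le (norm_nonneg w) with hw0 | hwpos
    · have := key 1 one_pos
      rw [← hw0] at this hcon
      nlinarith
    · have hsq : (0:ℝ) < ‖w‖^2 := by positivity
      have := key (d/‖w‖^2) (div_pos hdpos hsq)
      have h2 : (d/‖w‖^2)*‖w‖^2/2 = d/2 := by field_simp
      nlinarith

lemma conv_h1 {E : Type*} [NormedAddCommGroup E] [NormedSpace ℝ E]
    (y : E) (y' : StrongDual ℝ E) :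
    ConvexOn ℝ Set.univ (fun x : E => 1/2*‖x - y‖^2 - y' x) := by
  refine ⟨convex_univ, ?_⟩
  intro u _ v _ a b ha hb hab
  have hy : y = a • y + b • y := by rw [← add_smul, hab, one_smul]
  have hcomb : a • u + b • v - y = a • (u - y) + b • (v - y) := by
    rw [smul_sub, smul_sub]; nth_rewrite 1 [hy]; abel
  have hn : ‖a • u + b • v - y‖ ≤ a*‖u-y‖ + b*‖v-y‖ := by
    rw [hcomb]
    refine (norm_add_le _ _).trans ?_
    rw [norm_smul, norm_smul, Real.norm_eq_abs, Real.norm_eq_abs,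
      abs_of_nonneg ha, abs_of_nonneg hb]
  have hlin : y' (a • u + b • v) = a * y' u + b * y' v := by
    rw [map_add, map_smul, map_smul]; simp [smul_eq_mul]
  have hsq : ‖a • u + b • v - y‖^2 ≤ (a*‖u-y‖ + b*‖v-y‖)^2 :=
    pow_le_pow_left₀ (norm_nonneg _) hn 2
  simp only [smul_eq_mul, hlin]
  nlinarith [mul_nonneg (mul_nonneg ha hb) (sq_nonneg (‖u-y‖ - ‖v-y‖)),
    norm_nonneg (u-y), norm_nonneg (v-y)]

lemma conv_h2 {E : Type*} [NormedAddCommGroup E] [NormedSpace ℝ E]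
    (c : ℝ) (hc : 0 ≤ c) (xb : E) :
    ConvexOn ℝ Set.univ (fun x : E => c * ‖x - xb‖) := by
  refine ⟨convex_univ, ?_⟩
  intro u _ v _ a b ha hb hab
  have hy : xb = a • xb + b • xb := by rw [← add_smul, hab, one_smul]
  have hcomb : a • u + b • v - xb = a • (u - xb) + b • (v - xb) := by
    rw [smul_sub, smul_sub]; nth_rewrite 1 [hy]; abel
  have hn : ‖a • u + b • v - xb‖ ≤ a*‖u-xb‖ + b*‖v-xb‖ := by
    rw [hcomb]
    refine (norm_add_le _ _).trans ?_
    rw [norm_smul, norm_smul, Real.norm_eq_abs, Real.norm_eq_abs,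
      abs_of_nonneg ha, abs_of_nonneg hb]
  simp only [smul_eq_mul]
  nlinarith

set_option maxHeartbeats 1000000 in
theorem stmt5 {E : Type*} [NormedAddCommGroup E] [NormedSpace ℝ E] [CompleteSpace E]
    (W : WeakSubdiff E) (f : E → EReal)
    (hproper : ∃ x, f x ≠ ⊤) (hnotbot : ∀ x, f x ≠ ⊥)
    (hlsc : LowerSemicontinuous f) (hdown : InsigDownside f) :
    StablyRLDense {p : E × StrongDual ℝ E | p.2 ∈ W.sd f p.1} := by
  obtain ⟨a₀, b₀, c₀, ha₀, hdownb⟩ := hdown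
  obtain ⟨x₀, hx₀⟩ := hproper
  intro y y'
  set h₁ : E → ℝ := fun x => 1/2*‖x - y‖^2 - y' x with hh₁
  have h₁cont : Continuous h₁ := by
    apply Continuous.sub
    · exact continuous_const.mul (((continuous_id.sub continuous_const).norm).pow 2)
    · exact y'.continuous
  have h₁conv : ConvexOn ℝ Set.univ h₁ := conv_h1 y y'
  set g : E → EReal := fun z => f z + (h₁ z : EReal) with hg
  have gne_bot : ∀ z, g z ≠ ⊥ := by
    intro z h
    rcases EReal.add_eq_bot_iff.mp h with h' | h'
    · exact hnotbot z h'
    · exact EReal.coe_ne_bot _ h'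
  have glsc : LowerSemicontinuous g := lsc_add_cont hlsc h₁cont
  set α : ℝ := 1/2 - a₀ with hα
  have hαpos : 0 < α := by simp only [hα]; linarith
  set β : ℝ := b₀ + ‖y‖ + ‖y'‖ with hβ
  have gquad : ∀ x : E, ((α*‖x‖^2 - β*‖x‖ - c₀ : ℝ) : EReal) ≤ g x := by
    intro x
    have h1 := hdownb x
    have hreal : α*‖x‖^2 - β*‖x‖ - c₀ ≤ (-a₀*‖x‖^2 - b₀*‖x‖ - c₀) + h₁ x := by
      have hxy : |‖x‖ - ‖y‖| ≤ ‖x - y‖ := abs_norm_sub_norm_le x y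
      have hxy2 : (‖x‖ - ‖y‖)^2 ≤ ‖x-y‖^2 := by
        nlinarith [abs_nonneg (‖x‖-‖y‖), sq_abs (‖x‖-‖y‖), norm_nonneg (x-y)]
      have hy' : y' x ≤ ‖y'‖*‖x‖ := le_trans (le_abs_self _) (y'.le_opNorm x)
      simp only [hh₁, hα, hβ]
      nlinarith [norm_nonneg y, norm_nonneg x]
    calc ((α*‖x‖^2 - β*‖x‖ - c₀ : ℝ) : EReal)
        ≤ ((-a₀*‖x‖^2 - b₀*‖x‖ - c₀ + h₁ x : ℝ) : EReal) := EReal.coe_le_coe_iff.mpr hreal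
      _ = ((-a₀*‖x‖^2 - b₀*‖x‖ - c₀ : ℝ) : EReal) + ((h₁ x : ℝ) : EReal) := EReal.coe_add _ _
      _ ≤ f x + ((h₁ x : ℝ) : EReal) := add_le_add_left h1 _
  set B : ℝ := -(β^2/(4*α)) - c₀ with hB
  have hquadB : ∀ t : ℝ, B ≤ α*t^2 - β*t - c₀ := by
    intro t
    have h4α : (0:ℝ) < 4*α := by linarith
    have hkey : -(β^2/(4*α)) ≤ α*t^2 - β*t := by
      rw [neg_le]
      rw [le_div_iff₀ h4α]
      nlinarith [sq_nonneg (2*α*t - β)]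
    simp only [hB]; linarith
  have gB : ∀ x : E, ((B:ℝ):EReal) ≤ g x := by
    intro x
    exact le_trans (EReal.coe_le_coe_iff.mpr (hquadB ‖x‖)) (gquad x)
  have gx₀ne_top : g x₀ ≠ ⊤ := by
    simp only [hg]
    exact (EReal.add_lt_top hx₀ (EReal.coe_ne_top _)).ne
  have gproper : ∃ z, g z ≠ ⊤ := ⟨x₀, gx₀ne_top⟩
  set K : ℝ := (g x₀).toReal with hK
  have gx₀eq : g x₀ = ((K:ℝ):EReal) := (EReal.coe_toReal gx₀ne_top (gne_bot x₀)).symm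
  set C : ℝ := K + 1 with hC
  set G : E → ℝ := fun x => (min (g x) ((C:ℝ):EReal)).toReal with hGdef
  have minne_bot : ∀ x, min (g x) ((C:ℝ):EReal) ≠ ⊥ :=
    fun x => (lt_min ((gne_bot x).bot_lt) ((EReal.coe_ne_bot C).bot_lt)).ne'
  have minne_top : ∀ x, min (g x) ((C:ℝ):EReal) ≠ ⊤ :=
    fun x => ((min_le_right _ _).trans_lt (EReal.coe_lt_top C)).ne
  have mineq : ∀ x, ((G x : ℝ) : EReal) = min (g x) ((C:ℝ):EReal) :=
    fun x => EReal.coe_toReal (minne_top x) (minne_bot x)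
  have hcoeG : ∀ x, ((G x :ℝ):EReal) ≤ g x :=
    fun x => le_trans (le_of_eq (mineq x)) (min_le_left _ _)
  have Glsc : LowerSemicontinuous G := by
    intro x r hr
    have h1 : ((r:ℝ):EReal) < min (g x) ((C:ℝ):EReal) :=
      (EReal.coe_lt_coe_iff.mpr hr).trans_eq (mineq x)
    have hmin_lsc : LowerSemicontinuous fun x => min (g x) ((C:ℝ):EReal) :=
      lsc_min_const glsc _
    filter_upwards [hmin_lsc x _ h1] with z hz
    exact EReal.coe_lt_coe_iff.mp (hz.trans_eq (mineq z).symm)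
  have GB : ∀ x, min B C ≤ G x := by
    intro x
    have h1 : ((min B C : ℝ):EReal) ≤ min (g x) ((C:ℝ):EReal) := by
      apply le_min
      · exact le_trans (EReal.coe_le_coe_iff.mpr (min_le_left _ _)) (gB x)
      · exact EReal.coe_le_coe_iff.mpr (min_le_right _ _)
    have h2 := EReal.toReal_le_toReal h1 (EReal.coe_ne_bot _) (minne_top x)
    simpa using h2
  have Gx₀ : G x₀ = K := by
    simp only [hGdef]
    rw [gx₀eq, min_eq_left (EReal.coe_le_coe_iff.mpr (by simp only [hC]; linarith))]
    exact EReal.toReal_coe K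
  set R : ℝ := max 1 ((|β| + |c₀ + K|)/α) with hR
  have hRbound : ∀ x : E, g x ≤ ((K:ℝ):EReal) → ‖x‖ ≤ R := by
    intro x hx
    have h2 : α*‖x‖^2 - β*‖x‖ - c₀ ≤ K := EReal.coe_le_coe_iff.mp (le_trans (gquad x) hx)
    rcases le_or_gt ‖x‖ 1 with h | h
    · exact h.trans (le_max_left _ _)
    · refine le_trans ?_ (le_max_right _ _)
      rw [le_div_iff₀ hαpos]
      nlinarith [le_abs_self β, le_abs_self (c₀ + K), abs_nonneg (c₀ + K), abs_nonneg β,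
        mul_nonneg (sub_nonneg.mpr (le_abs_self β)) (norm_nonneg x),
        mul_nonneg (abs_nonneg (c₀ + K)) (norm_nonneg x)]
  set M : ℝ := R + ‖y‖ + 1 with hM
  have hR1 : (1:ℝ) ≤ R := le_max_left _ _
  have hM0 : 0 ≤ M := by
    have := norm_nonneg y
    simp only [hM]; linarith
  refine ⟨M, hM0, ?_⟩
  intro ε₀ hε₀
  have h2M : (0:ℝ) < 2*(2*M+1) := by linarith
  set δ : ℝ := min 1 (ε₀/(2*(2*M+1))) with hδ
  have hδpos : 0 < δ := lt_min one_pos (div_pos hε₀ h2M)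
  have hδ1 : δ ≤ 1 := min_le_left _ _
  obtain ⟨xb, hxb1, hxb2⟩ := my_ekeland_s5 G Glsc (min B C) GB δ hδpos x₀
  have hGxb : G xb ≤ K := by
    have hd : (0:ℝ) ≤ dist xb x₀ := dist_nonneg
    rw [Gx₀] at hxb1
    nlinarith
  have hgxb : g xb = ((G xb:ℝ):EReal) := by
    rcases le_or_gt (g xb) ((C:ℝ):EReal) with h | h
    · exact ((mineq xb).trans (min_eq_left h)).symm
    · exfalso
      have h1 : G xb = C := by
        simp only [hGdef]
        rw [min_eq_right h.le]
        exact EReal.toReal_coe C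
      rw [h1, hC] at hGxb
      linarith
  have hgxbK : g xb ≤ ((K:ℝ):EReal) := by
    rw [hgxb]; exact EReal.coe_le_coe_iff.mpr hGxb
  have hxbnorm : ‖xb‖ ≤ R := hRbound xb hgxbK
  have hvnorm : ‖xb - y‖ ≤ R + ‖y‖ := (norm_sub_le _ _).trans (by linarith [norm_nonneg y])
  set h₂ : E → ℝ := fun z => δ * ‖z - xb‖ with hh₂
  have h₂cont : Continuous h₂ :=
    continuous_const.mul ((continuous_id.sub continuous_const).norm)
  have h₂conv : ConvexOn ℝ Set.univ h₂ := conv_h2 δ hδpos.le xb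
  set F : E → EReal := fun z => g z + (h₂ z : EReal) with hF
  have Fne_bot : ∀ z, F z ≠ ⊥ := by
    intro z h
    rcases EReal.add_eq_bot_iff.mp h with h' | h'
    · exact gne_bot z h'
    · exact EReal.coe_ne_bot _ h'
  have Fxb : F xb = g xb := by
    have h0 : h₂ xb = 0 := by simp [hh₂]
    simp only [hF, h0, EReal.coe_zero, add_zero]
  have Fproper : ∃ z, F z ≠ ⊤ := by
    refine ⟨x₀, ?_⟩
    simp only [hF]
    exact (EReal.add_lt_top gx₀ne_top (EReal.coe_ne_top _)).ne
  have Flsc : LowerSemicontinuous F := lsc_add_cont glsc h₂cont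
  have hstrict : ∀ z, z ≠ xb → F xb < F z := by
    intro z hz
    have h1 := hxb2 z hz
    rw [dist_eq_norm] at h1
    have h2 : ((G xb : ℝ):EReal) < ((G z + δ*‖z - xb‖ : ℝ):EReal) :=
      EReal.coe_lt_coe_iff.mpr (by linarith)
    rw [Fxb, hgxb]
    calc ((G xb:ℝ):EReal) < ((G z:ℝ):EReal) + ((δ*‖z-xb‖:ℝ):EReal) := by
          rw [← EReal.coe_add]; exact h2
      _ ≤ g z + ((h₂ z:ℝ):EReal) := add_le_add_left (hcoeG z) _
  have h0 := W.zero_mem F Fproper Fne_bot Flsc xb hstrict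
  have hsub1 : W.sd F xb ⊆ W.sd g xb + convSubdiff h₂ xb :=
    W.sum_rule g gproper gne_bot glsc h₂ h₂cont h₂conv xb
  have hsub2 : W.sd g xb ⊆ W.sd f xb + convSubdiff h₁ xb :=
    W.sum_rule f ⟨x₀, hx₀⟩ hnotbot hlsc h₁ h₁cont h₁conv xb
  obtain ⟨a, ha, z₂, hz₂, hsum1⟩ := Set.mem_add.mp (hsub1 h0)
  obtain ⟨s, hs, z₁, hz₁, hsum2⟩ := Set.mem_add.mp (hsub2 ha)
  have hz₁' : ∀ u : E, h₁ xb + z₁ (u - xb) ≤ h₁ u := hz₁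
  have hz₂' : ∀ u : E, h₂ xb + z₂ (u - xb) ≤ h₂ u := hz₂
  set v : E := xb - y with hv
  set q : StrongDual ℝ E := z₁ + y' with hqdef
  have hqineq : ∀ w : E, q (w - v) ≤ 1/2*‖w‖^2 - 1/2*‖v‖^2 := by
    intro w
    have h1 := hz₁' (w + y)
    simp only [hh₁] at h1
    have harg : w + y - xb = w - v := by simp only [hv]; abel
    rw [harg] at h1
    have hqval : q (w - v) = z₁ (w - v) + y' (w - v) := by
      simp [hqdef]
    have hy'lin : y' (w - v) = y' (w + y) - y' xb := by
      rw [← harg, map_sub]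
    have hnorm : ‖w + y - y‖ = ‖w‖ := by rw [add_sub_cancel_right]
    rw [hnorm] at h1
    rw [hqval, hy'lin]
    simp only [hv]
    linarith
  obtain ⟨hqv, hqn⟩ := dual_sq v q hqineq
  have hz₂n : ‖z₂‖ ≤ δ := by
    refine dual_bound z₂ δ hδpos.le fun w => ?_
    have h1 := hz₂' (xb + w)
    have harg : xb + w - xb = w := by abel
    rw [harg] at h1
    simp only [hh₂, sub_self, norm_zero, mul_zero, zero_add] at h1
    have harg2 : xb + w - xb = w := by abel
    rw [harg2] at h1
    exact h1
  have hs_eq : s = -(z₁ + z₂) := by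
    have h0' : s + (z₁ + z₂) = 0 := by rw [← add_assoc, hsum2, hsum1]
    exact eq_neg_of_add_eq_zero_left h0'
  have hsy : s - y' = -(q + z₂) := by
    rw [hs_eq, hqdef]; abel
  have hnormsy : ‖s - y'‖ = ‖q + z₂‖ := by rw [hsy, norm_neg]
  have hqz : ‖q + z₂‖ ≤ ‖v‖ + δ := (norm_add_le _ _).trans (by linarith)
  have hvM : ‖v‖ ≤ M := by
    simp only [hv, hM]
    linarith [hvnorm]
  refine ⟨(xb, s), hs, ?_, ?_, ?_⟩
  · exact le_trans hvnorm (by simp only [hM]; linarith)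
  · show ‖s - y'‖ ≤ M
    rw [hnormsy]
    calc ‖q + z₂‖ ≤ ‖v‖ + δ := hqz
      _ ≤ (R + ‖y‖) + 1 := by
          have : ‖v‖ ≤ R + ‖y‖ := hvnorm
          linarith
      _ = M := by simp only [hM]
  · show rL (xb - y) (s - y') < ε₀
    have happ : (s - y') v = -(q v) - z₂ v := by
      rw [hsy]
      simp [ContinuousLinearMap.neg_apply, ContinuousLinearMap.add_apply]
      ring
    have hz₂v : -(z₂ v) ≤ δ*‖v‖ := by
      calc -(z₂ v) ≤ |z₂ v| := neg_le_abs _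
        _ ≤ ‖z₂‖*‖v‖ := z₂.le_opNorm _
        _ ≤ δ*‖v‖ := mul_le_mul_of_nonneg_right hz₂n (norm_nonneg _)
    have h2 : ‖s - y'‖^2 ≤ (‖v‖ + δ)^2 := by
      rw [hnormsy]
      exact pow_le_pow_left₀ (norm_nonneg _) hqz 2
    have hδ2 : δ ≤ ε₀/(2*(2*M+1)) := min_le_right _ _
    have hδ3 : δ * (2*(2*M+1)) ≤ ε₀ := (le_div_iff₀ h2M).mp hδ2
    simp only [rL]
    rw [← hv, happ]
    have hδM : δ*‖v‖ ≤ δ*M := mul_le_mul_of_nonneg_left hvM hδpos.le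
    have hδδ : δ*δ ≤ δ*1 := mul_le_mul_of_nonneg_left hδ1 hδpos.le
    have hδM0 : 0 ≤ δ*M := mul_nonneg hδpos.le hM0
    linarith [h2, hqv, hz₂v, hδM, hδδ, hδ3, hδpos, hδM0]
end

section
/- Let E be a real Banach space and A an r_L-dense subset of E × E*. Then the monotone polar A^μ is contained in the norm-closure of A in E × E*. -/
/-- `A ⊆ E × E*` is `r_L`-dense: for every `(y, y*)`,
`inf_{(s,s*) ∈ A} r_L(s - y, s* - y*) = 0` (since `r_L ≥ 0`, this means for every
`ε > 0` there is `(s, s*) ∈ A` with `r_L(s - y, s* - y*) < ε`). -/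
def RLDense {E : Type*} [NormedAddCommGroup E] [NormedSpace ℝ E]
    (A : Set (E × StrongDual ℝ E)) : Prop :=
  ∀ (y : E) (y' : StrongDual ℝ E), ∀ ε > (0 : ℝ),
    ∃ p ∈ A, rL (p.1 - y) (p.2 - y') < ε

/-- The monotone polar `A^μ` of `A ⊆ E × E*`. -/
def monoPolar {E : Type*} [NormedAddCommGroup E] [NormedSpace ℝ E]
    (A : Set (E × StrongDual ℝ E)) : Set (E × StrongDual ℝ E) :=
  {p | ∀ q ∈ A, 0 ≤ (q.2 - p.2) (q.1 - p.1)}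

theorem stmt13 {E : Type*} [NormedAddCommGroup E] [NormedSpace ℝ E] [CompleteSpace E]
    (A : Set (E × StrongDual ℝ E)) (hA : RLDense A) :
    monoPolar A ⊆ closure A := by
  intro p hp
  rw [Metric.mem_closure_iff]
  intro ε hε
  obtain ⟨q, hqA, hq⟩ := hA p.1 p.2 (ε ^ 2 / 2) (by positivity)
  have hpol := hp q hqA
  have hpair : (q.2 - p.2) (q.1 - p.1) = (q.2 - p.2) (q.1 - p.1) := rfl
  have hrl : rL (q.1 - p.1) (q.2 - p.2) =
      1 / 2 * ‖q.1 - p.1‖ ^ 2 + 1 / 2 * ‖q.2 - p.2‖ ^ 2 + (q.2 - p.2) (q.1 - p.1) := rfl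
  have h1 : 1 / 2 * ‖q.1 - p.1‖ ^ 2 + 1 / 2 * ‖q.2 - p.2‖ ^ 2 < ε ^ 2 / 2 := by
    have := hq
    rw [hrl] at this
    linarith
  have hn1 : ‖q.1 - p.1‖ ^ 2 < ε ^ 2 := by nlinarith [sq_nonneg ‖q.2 - p.2‖]
  have hn2 : ‖q.2 - p.2‖ ^ 2 < ε ^ 2 := by nlinarith [sq_nonneg ‖q.1 - p.1‖]
  have hd1 : ‖q.1 - p.1‖ < ε := by nlinarith [norm_nonneg (q.1 - p.1)]
  have hd2 : ‖q.2 - p.2‖ < ε := by nlinarith [norm_nonneg (q.2 - p.2)]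
  refine ⟨q, hqA, ?_⟩
  rw [Prod.dist_eq]
  simp only [dist_eq_norm]
  rw [max_lt_iff]
  constructor
  · rwa [norm_sub_rev]
  · rwa [norm_sub_rev]
end

section
/- Let E be a real Banach space and S : E ⇉ E* a multifunction such that gra S is a norm-closed, r_L-dense, monotone subset of E × E*. Then S is maximally monotone, i.e. gra S = (gra S)^μ. -/
theorem stmt14 {E : Type*} [NormedAddCommGroup E] [NormedSpace ℝ E] [CompleteSpace E]
    (S : E → Set (StrongDual ℝ E))
    (hclosed : IsClosed {p : E × StrongDual ℝ E | p.2 ∈ S p.1})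
    (hdense : RLDense {p : E × StrongDual ℝ E | p.2 ∈ S p.1})
    (hmono : {p : E × StrongDual ℝ E | p.2 ∈ S p.1} ⊆
      monoPolar {p : E × StrongDual ℝ E | p.2 ∈ S p.1}) :
    {p : E × StrongDual ℝ E | p.2 ∈ S p.1} =
      monoPolar {p : E × StrongDual ℝ E | p.2 ∈ S p.1} := by
  set A := {p : E × StrongDual ℝ E | p.2 ∈ S p.1} with hA
  apply le_antisymm hmono
  intro p hp
  have hcl : p ∈ closure A := by
    rw [Metric.mem_closure_iff]
    intro ε hε
    obtain ⟨q, hqA, hq⟩ := hdense p.1 p.2 (ε ^ 2 / 2) (by positivity)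
    refine ⟨q, hqA, ?_⟩
    have hmon : 0 ≤ (q.2 - p.2) (q.1 - p.1) := hp q hqA
    have h1 : 1 / 2 * ‖q.1 - p.1‖ ^ 2 + 1 / 2 * ‖q.2 - p.2‖ ^ 2 < ε ^ 2 / 2 := by
      have := hq
      unfold rL at this
      linarith
    have hn1 : ‖q.1 - p.1‖ ^ 2 < ε ^ 2 := by nlinarith [sq_nonneg ‖q.2 - p.2‖]
    have hn2 : ‖q.2 - p.2‖ ^ 2 < ε ^ 2 := by nlinarith [sq_nonneg ‖q.1 - p.1‖]
    have d1 : ‖q.1 - p.1‖ < ε := lt_of_pow_lt_pow_left₀ 2 hε.le hn1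
    have d2 : ‖q.2 - p.2‖ < ε := lt_of_pow_lt_pow_left₀ 2 hε.le hn2
    rw [dist_comm, Prod.dist_eq]
    simp only [dist_eq_norm]
    exact max_lt d1 d2
  rwa [hclosed.closure_eq] at hcl
end

section
/- The monotone polar of the graph of cosine is empty: there is no pair (x, x*) ∈ ℝ × ℝ such that (y − x)(cos y − x*) ≥ 0 for all y ∈ ℝ. Equivalently, with A = {(y, cos y) : y ∈ ℝ} ⊆ ℝ × ℝ, one has A^μ = ∅. -/
/-- The monotone polar `A^μ` of `A ⊆ ℝ × ℝ`. -/
def monoPolarR (A : Set (ℝ × ℝ)) : Set (ℝ × ℝ) :=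
  {p | ∀ q ∈ A, 0 ≤ (q.1 - p.1) * (q.2 - p.2)}

lemma no_point (x x' : ℝ) : ¬ ∀ y : ℝ, 0 ≤ (y - x) * (Real.cos y - x') := by
  intro h
  have hπ : (0:ℝ) < Real.pi := Real.pi_pos
  -- y1 = (2k+1)π > x with cos y1 = -1
  set k : ℤ := ⌈x / (2 * Real.pi)⌉ with hk
  have hk1 : x / (2 * Real.pi) ≤ (k : ℝ) := Int.le_ceil _
  have hx1 : x ≤ 2 * Real.pi * k := by
    rw [div_le_iff₀ (by positivity)] at hk1; linarith [hk1]
  have hy1 : x < 2 * (k:ℝ) * Real.pi + Real.pi := by nlinarith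
  have hc1 : Real.cos (2 * (k:ℝ) * Real.pi + Real.pi) = -1 := by
    rw [Real.cos_add_pi]
    simp [Real.cos_int_mul_two_pi]
    rw [show 2 * (k:ℝ) * Real.pi = (k:ℝ) * (2 * Real.pi) by ring,
      Real.cos_int_mul_two_pi]
  -- y2 = 2mπ < x with cos y2 = 1
  set m : ℤ := ⌊x / (2 * Real.pi)⌋ - 1 with hm
  have hm1 : (m : ℝ) < x / (2 * Real.pi) := by
    push_cast [hm]
    linarith [Int.sub_one_lt_floor (x / (2 * Real.pi)), Int.floor_le (x / (2 * Real.pi))]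
  have hy2 : (m:ℝ) * (2 * Real.pi) < x := by
    rw [lt_div_iff₀ (by positivity)] at hm1; linarith [hm1]
  have hc2 : Real.cos ((m:ℝ) * (2 * Real.pi)) = 1 := Real.cos_int_mul_two_pi m
  have h1 := h (2 * (k:ℝ) * Real.pi + Real.pi)
  have h2 := h ((m:ℝ) * (2 * Real.pi))
  rw [hc1] at h1
  rw [hc2] at h2
  -- from h1: x' ≤ -1; from h2: x' ≥ 1
  have hx'1 : x' ≤ -1 := by nlinarith
  have hx'2 : 1 ≤ x' := by nlinarith
  linarith

theorem stmt16 :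
    (¬ ∃ x x' : ℝ, ∀ y : ℝ, 0 ≤ (y - x) * (Real.cos y - x')) ∧
      monoPolarR {q : ℝ × ℝ | ∃ y : ℝ, q = (y, Real.cos y)} = ∅ := by
  constructor
  · rintro ⟨x, x', h⟩
    exact no_point x x' h
  · ext p
    simp only [monoPolarR, Set.mem_setOf_eq, Set.mem_empty_iff_false, iff_false]
    intro h
    apply no_point p.1 p.2
    intro y
    have := h (y, Real.cos y) ⟨y, rfl⟩
    simpa using this
end

section
/- (Rockafellar) Let E be a real Banach space and f : E → ]−∞,+∞] a proper, convex, lower semicontinuous function. Then the subdifferential ∂f : E ⇉ E* is maximally monotone, i.e. gra ∂f = (gra ∂f)^μ. -/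
set_option maxHeartbeats 1000000


/-- Convexity for a function `f : E → ]-∞,+∞]` (valued in `EReal`). -/
def ERealConvexOn {E : Type*} [NormedAddCommGroup E] [NormedSpace ℝ E]
    (f : E → EReal) : Prop :=
  ∀ x y : E, ∀ a b : ℝ, 0 ≤ a → 0 ≤ b → a + b = 1 →
    f (a • x + b • y) ≤ (a : EReal) * f x + (b : EReal) * f y

/-- The convex subdifferential of `f : E → ]-∞,+∞]` at `x`:
`∂f(x) = {x* : ∀ y, f(y) ≥ f(x) + ⟨y - x, x*⟩}`. -/
def subdiff {E : Type*} [NormedAddCommGroup E] [NormedSpace ℝ E]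
    (f : E → EReal) (x : E) : Set (StrongDual ℝ E) :=
  {x' | ∀ y : E, f x + ((x' (y - x) : ℝ) : EReal) ≤ f y}

lemma helper_lt_add (x y : EReal) (r s : ℝ) (hx : (r:EReal) < x) (hy : (s:EReal) ≤ y) :
    ((r+s:ℝ):EReal) < x + y := by
  induction x using EReal.rec with
  | bot => exact absurd hx (by simp)
  | top =>
      induction y using EReal.rec with
      | bot => exact absurd hy (by simp)
      | top => exact lt_of_lt_of_le (EReal.coe_lt_top _) (by simp)
      | coe b => exact lt_of_lt_of_le (EReal.coe_lt_top _) (by rw [EReal.top_add_coe])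
  | coe a =>
      induction y using EReal.rec with
      | bot => exact absurd hy (by simp)
      | top => exact lt_of_lt_of_le (EReal.coe_lt_top _) (by rw [EReal.coe_add_top])
      | coe b =>
          have hx' : r < a := by exact_mod_cast hx
          have hy' : s ≤ b := by exact_mod_cast hy
          exact_mod_cast add_lt_add_of_lt_of_le hx' hy'
lemma helper_le_add (x y : EReal) (r s : ℝ) (hx : (r:EReal) ≤ x) (hy : (s:EReal) ≤ y) :
    ((r+s:ℝ):EReal) ≤ x + y := by
  push_cast; exact add_le_add hx hy

lemma lsc_add_cont_s17 {E : Type*} [NormedAddCommGroup E] [NormedSpace ℝ E]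
    (f : E → EReal) (hf : LowerSemicontinuous f) (hnb : ∀ x, f x ≠ ⊥)
    (φ : E → ℝ) (hφ : Continuous φ) :
    LowerSemicontinuous (fun y => f y + ((φ y : ℝ) : EReal)) := by
  intro x c hc
  have hGy : ∀ y : E, (⊥ : EReal) < f y + (φ y : EReal) := by
    intro y
    rw [bot_lt_iff_ne_bot, ne_eq, EReal.add_eq_bot_iff]
    push_neg
    exact ⟨hnb y, EReal.coe_ne_bot _⟩
  induction c using EReal.rec with
  | bot => exact Filter.Eventually.of_forall hGy
  | top => exact absurd (lt_top_iff_ne_top.mp (lt_of_lt_of_le hc le_top)) (by simp)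
  | coe c =>
    have h1 : ((c - φ x : ℝ) : EReal) < f x := by
      rcases eq_or_ne (f x) ⊤ with h | h
      · rw [h]; exact EReal.coe_lt_top _
      · obtain ⟨a, ha⟩ : ∃ a : ℝ, f x = a := by
          lift f x to ℝ using ⟨h, hnb x⟩ with a; exact ⟨a, rfl⟩
        simp only [] at hc
        rw [ha] at hc ⊢
        have : c < a + φ x := by exact_mod_cast hc
        exact_mod_cast by linarith
    obtain ⟨K, hK1, hK2⟩ := EReal.exists_between_coe_real h1
    have hK1' : c - φ x < K := by exact_mod_cast hK1
    have hev1 := hf x _ hK2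
    have hev2 : ∀ᶠ y in nhds x, c - K < φ y :=
      (hφ.tendsto x).eventually (eventually_gt_nhds (by linarith))
    filter_upwards [hev1, hev2] with y h1y h2y
    have := helper_lt_add (f y) ((φ y : ℝ) : EReal) K (c - K) h1y (by exact_mod_cast h2y.le)
    simpa using this

lemma exists_affine_minorant {E : Type*} [NormedAddCommGroup E] [NormedSpace ℝ E]
    (f : E → EReal) (hproper : ∃ x, f x ≠ ⊤) (hnotbot : ∀ x, f x ≠ ⊥)
    (hconv : ERealConvexOn f) (hlsc : LowerSemicontinuous f) :
    ∃ (w : E →L[ℝ] ℝ) (b : ℝ), ∀ y, ((w y + b : ℝ) : EReal) ≤ f y := by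
  classical
  set epi : Set (E × ℝ) := {p | f p.1 ≤ (p.2 : EReal)} with hepi
  have hfin : ∀ p ∈ epi, ∃ r : ℝ, f p.1 = (r : EReal) ∧ r ≤ p.2 := by
    rintro ⟨y, t⟩ hp
    have h1 : f y ≠ ⊤ := (lt_of_le_of_lt hp (EReal.coe_lt_top t)).ne
    obtain ⟨r, hr⟩ : ∃ r : ℝ, f y = r := by
      lift f y to ℝ using ⟨h1, hnotbot y⟩ with a; exact ⟨a, rfl⟩
    have hp' : f y ≤ (t : EReal) := hp
    rw [hr] at hp'
    exact ⟨r, hr, by exact_mod_cast hp'⟩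
  have hconvepi : Convex ℝ epi := by
    rintro p hp q hq a b ha hb hab
    obtain ⟨r, hr, hr2⟩ := hfin p hp
    obtain ⟨s, hs, hs2⟩ := hfin q hq
    have := hconv p.1 q.1 a b ha hb hab
    rw [hr, hs] at this
    have h2 : ((a*r + b*s : ℝ) : EReal) ≤ ((a * p.2 + b * q.2 : ℝ) : EReal) := by
      exact_mod_cast add_le_add (mul_le_mul_of_nonneg_left hr2 ha)
        (mul_le_mul_of_nonneg_left hs2 hb)
    show f (a • p.1 + b • q.1) ≤ (((a • p + b • q).2 : ℝ) : EReal)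
    have heq : (((a • p + b • q).2 : ℝ) : EReal) = ((a * p.2 + b * q.2 : ℝ) : EReal) := by
      norm_num [Prod.smul_snd, smul_eq_mul]
    rw [heq]
    refine le_trans this (le_trans (le_of_eq ?_) h2)
    rw [← EReal.coe_mul, ← EReal.coe_mul, ← EReal.coe_add]
  have hclosed : IsClosed epi := by
    rw [← isOpen_compl_iff, isOpen_iff_mem_nhds]
    rintro ⟨y, t⟩ hp
    have hp' : (t : EReal) < f y := not_le.mp hp
    obtain ⟨K, hK1, hK2⟩ : ∃ K : ℝ, t < K ∧ (K : EReal) < f y := by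
      rcases eq_or_ne (f y) ⊤ with h | h
      · exact ⟨t + 1, by linarith, by rw [h]; exact EReal.coe_lt_top _⟩
      · obtain ⟨K, h1, h2⟩ := EReal.exists_between_coe_real hp'
        exact ⟨K, by exact_mod_cast h1, h2⟩
    have hev := hlsc y _ hK2
    rw [nhds_prod_eq]
    filter_upwards [Filter.prod_mem_prod hev (Iio_mem_nhds hK1)] with q hq
    rcases hq with ⟨hq1, hq2⟩
    simp only [Set.mem_compl_iff, hepi, Set.mem_setOf_eq, not_le]
    exact lt_trans (by exact_mod_cast hq2) hq1
  obtain ⟨y₀, hy₀⟩ := hproper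
  obtain ⟨F, hF⟩ : ∃ r : ℝ, f y₀ = r := by
    lift f y₀ to ℝ using ⟨hy₀, hnotbot y₀⟩ with a; exact ⟨a, rfl⟩
  have hpt : ((y₀, F - 1) : E × ℝ) ∉ epi := by
    simp only [hepi, Set.mem_setOf_eq, hF, not_le]
    exact_mod_cast by linarith
  obtain ⟨L, u, hLpt, hLepi⟩ := geometric_hahn_banach_point_closed hconvepi hclosed hpt
  have hdec : ∀ (y : E) (r : ℝ), L (y, r) = L (y, 0) + r * L (0, 1) := by
    intro y r
    have h : ((y, r) : E × ℝ) = (y, (0:ℝ)) + r • ((0:E), (1:ℝ)) := by simp [Prod.ext_iff]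
    rw [h, map_add, map_smul, smul_eq_mul]
  set α := L ((0:E), (1:ℝ)) with hα
  have hmem0 : ((y₀, F) : E × ℝ) ∈ epi := by simp [hepi, hF]
  have h1 := hLepi _ hmem0
  rw [hdec] at h1 hLpt
  have hαpos : 0 < α := by linarith
  refine ⟨(-(α⁻¹)) • (L.comp (ContinuousLinearMap.inl ℝ E ℝ)), u / α, ?_⟩
  intro y
  rcases eq_or_ne (f y) ⊤ with h | h
  · rw [h]; exact le_top
  obtain ⟨s, hs⟩ : ∃ r : ℝ, f y = r := by
    lift f y to ℝ using ⟨h, hnotbot y⟩ with a; exact ⟨a, rfl⟩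
  have hmem : ((y, s) : E × ℝ) ∈ epi := by simp [hepi, hs]
  have h2 := hLepi _ hmem
  rw [hdec] at h2
  rw [hs]
  have : -(α⁻¹) * L (y, 0) + u / α ≤ s := by
    rw [div_eq_mul_inv]
    have hinv : α * α⁻¹ = 1 := mul_inv_cancel₀ hαpos.ne'
    have h3 : u * α⁻¹ < L (y, 0) * α⁻¹ + s := by
      have h4 := mul_lt_mul_of_pos_right h2 (inv_pos.mpr hαpos)
      rw [add_mul, mul_assoc, hinv, mul_one] at h4
      exact h4
    linarith
  simp only [ContinuousLinearMap.smul_apply, ContinuousLinearMap.comp_apply,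
    ContinuousLinearMap.inl_apply, smul_eq_mul]
  exact_mod_cast this

lemma exists_subgradient_of_min {E : Type*} [NormedAddCommGroup E] [NormedSpace ℝ E]
    (f : E → EReal) (hnotbot : ∀ x, f x ≠ ⊥) (hconv : ERealConvexOn f)
    (h : E → ℝ) (hhc : Continuous h)
    (hhconv : ∀ x y : E, ∀ a b : ℝ, 0 ≤ a → 0 ≤ b → a + b = 1 →
      h (a • x + b • y) ≤ a * h x + b * h y)
    (v : E) (F : ℝ) (hF : f v = (F : EReal))
    (hmin : ∀ y, f v + ((h v : ℝ) : EReal) ≤ f y + ((h y : ℝ) : EReal)) :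
    ∃ w : E →L[ℝ] ℝ, (∀ y, f v + ((w (y - v) : ℝ) : EReal) ≤ f y) ∧
      (∀ y, h v - w (y - v) ≤ h y) := by
  classical
  set C : Set (E × ℝ) := {p | f p.1 ≤ ((F + p.2 : ℝ) : EReal)} with hC
  set D : Set (E × ℝ) := {p | p.2 + h p.1 < h v} with hD
  have hsnd : ∀ (a b : ℝ) (p q : E × ℝ), ((a • p + b • q).2 : ℝ) = a * p.2 + b * q.2 := by
    intro a b p q; simp [smul_eq_mul]
  have hfinC : ∀ p ∈ C, ∃ r : ℝ, f p.1 = (r : EReal) ∧ r ≤ F + p.2 := by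
    rintro ⟨y, t⟩ hp
    have hp' : f y ≤ ((F + t : ℝ) : EReal) := hp
    have h1 : f y ≠ ⊤ := (lt_of_le_of_lt hp' (EReal.coe_lt_top _)).ne
    obtain ⟨r, hr⟩ : ∃ r : ℝ, f y = r := by
      lift f y to ℝ using ⟨h1, hnotbot y⟩ with a; exact ⟨a, rfl⟩
    rw [hr] at hp'
    exact ⟨r, hr, by exact_mod_cast hp'⟩
  have hCconv : Convex ℝ C := by
    rintro p hp q hq a b ha hb hab
    obtain ⟨r, hr, hr2⟩ := hfinC p hp
    obtain ⟨s, hs, hs2⟩ := hfinC q hq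
    have h1 := hconv p.1 q.1 a b ha hb hab
    rw [hr, hs] at h1
    show f (a • p.1 + b • q.1) ≤ ((F + (a • p + b • q).2 : ℝ) : EReal)
    have heq : (F + (a • p + b • q).2 : ℝ) = a * (F + p.2) + b * (F + q.2) := by
      rw [hsnd]; linear_combination F * hab.symm
    rw [heq]
    refine le_trans h1 ?_
    rw [← EReal.coe_mul, ← EReal.coe_mul, ← EReal.coe_add]
    exact_mod_cast add_le_add (mul_le_mul_of_nonneg_left hr2 ha)
      (mul_le_mul_of_nonneg_left hs2 hb)
  have hDopen : IsOpen D :=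
    isOpen_lt (continuous_snd.add (hhc.comp continuous_fst)) continuous_const
  have hDconv : Convex ℝ D := by
    rintro p hp q hq a b ha hb hab
    have hp' : p.2 + h p.1 < h v := hp
    have hq' : q.2 + h q.1 < h v := hq
    show (a • p + b • q).2 + h (a • p.1 + b • q.1) < h v
    rw [hsnd]
    have h1 := hhconv p.1 q.1 a b ha hb hab
    rcases eq_or_lt_of_le ha with rfl | ha'
    · simp only [zero_add] at hab; subst hab; simpa using hq'
    · have hsum : a * h v + b * h v = h v := by rw [← add_mul, hab, one_mul]
      linarith [mul_le_mul_of_nonneg_left hq'.le hb, mul_lt_mul_of_pos_left hp' ha']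
  have hdisj : Disjoint D C := by
    rw [Set.disjoint_left]
    rintro ⟨y, t⟩ hpD hpC
    obtain ⟨r, hr, hr2⟩ := hfinC _ hpC
    have hpD' : t + h y < h v := hpD
    have hm := hmin y
    rw [hF, hr] at hm
    have hm' : F + h v ≤ r + h y := by exact_mod_cast hm
    simp only at hr2 hpD'
    linarith
  obtain ⟨L, u, hLD, hLC⟩ := geometric_hahn_banach_open hDconv hDopen hCconv hdisj
  have hdec : ∀ (y : E) (r : ℝ), L (y, r) = L (y, 0) + r * L (0, 1) := by
    intro y r
    have hsplit : ((y, r) : E × ℝ) = (y, (0:ℝ)) + r • ((0:E), (1:ℝ)) := by simp [Prod.ext_iff]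
    rw [hsplit, map_add, map_smul, smul_eq_mul]
  set α := L ((0:E), (1:ℝ)) with hα
  have hvC : ((v, 0) : E × ℝ) ∈ C := by
    show f v ≤ ((F + 0 : ℝ) : EReal); rw [hF]; exact_mod_cast le_of_eq (by ring)
  have huv : u ≤ L (v, 0) := hLC _ hvC
  have hεD : ∀ ε : ℝ, 0 < ε → L (v, 0) - ε * α < u := by
    intro ε hε
    have : ((v, -ε) : E × ℝ) ∈ D := by show -ε + h v < h v; linarith
    have := hLD _ this
    rw [hdec] at this; linarith
  have hαpos : 0 < α := by
    by_contra hcon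
    push_neg at hcon
    have := hεD 1 one_pos
    nlinarith
  have hu : L (v, 0) = u := by
    refine le_antisymm ?_ huv
    refine le_of_forall_pos_le_add ?_
    intro ε hε
    have := hεD (ε / α) (div_pos hε hαpos)
    have hcancel : ε / α * α = ε := div_mul_cancel₀ ε hαpos.ne'
    nlinarith
  set w : E →L[ℝ] ℝ := (-(α⁻¹)) • (L.comp (ContinuousLinearMap.inl ℝ E ℝ)) with hw
  have hwval : ∀ y : E, w y = -(α⁻¹) * L (y, 0) := by
    intro y
    simp [hw, ContinuousLinearMap.smul_apply, smul_eq_mul]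
  have hwsub : ∀ y : E, w (y - v) = α⁻¹ * (L (v, 0) - L (y, 0)) := by
    intro y
    rw [map_sub, hwval, hwval]; ring
  refine ⟨w, ?_, ?_⟩
  · intro y
    rcases eq_or_ne (f y) ⊤ with htop | htop
    · rw [htop]; exact le_top
    obtain ⟨s, hs⟩ : ∃ r : ℝ, f y = r := by
      lift f y to ℝ using ⟨htop, hnotbot y⟩ with a; exact ⟨a, rfl⟩
    have hyC : ((y, s - F) : E × ℝ) ∈ C := by
      show f y ≤ ((F + (s - F) : ℝ) : EReal); rw [hs]; exact_mod_cast le_of_eq (by ring)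
    have h2 := hLC _ hyC
    rw [hdec] at h2
    rw [hF, hs, hwsub, hu]
    have hinv : α * α⁻¹ = 1 := mul_inv_cancel₀ hαpos.ne'
    have h3 : u * α⁻¹ ≤ L (y, 0) * α⁻¹ + (s - F) := by
      have h4 := mul_le_mul_of_nonneg_right h2 (inv_pos.mpr hαpos).le
      rw [add_mul, mul_assoc, hinv, mul_one] at h4
      exact h4
    have : F + α⁻¹ * (u - L (y, 0)) ≤ s := by nlinarith
    exact_mod_cast this
  · intro y
    refine sub_le_iff_le_add.mpr ?_
    have key : ∀ ε : ℝ, 0 < ε → h v - h y ≤ w (y - v) + ε := by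
      intro ε hε
      have hyD : ((y, h v - h y - ε) : E × ℝ) ∈ D := by
        show (h v - h y - ε) + h y < h v; linarith
      have h2 := hLD _ hyD
      rw [hdec] at h2
      rw [hwsub, hu]
      have hinv : α * α⁻¹ = 1 := mul_inv_cancel₀ hαpos.ne'
      have h4 := mul_le_mul_of_nonneg_right h2.le (inv_pos.mpr hαpos).le
      rw [add_mul, mul_assoc, hinv, mul_one] at h4
      nlinarith
    have : h v - h y ≤ w (y - v) := by
      refine le_of_forall_pos_le_add ?_
      intro ε hε; exact key ε hε
    linarith

lemma ekeland_real {E : Type*} [NormedAddCommGroup E] [NormedSpace ℝ E] [CompleteSpace E]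
    (g : E → ℝ) (hg : LowerSemicontinuous g) (b : ℝ) (hb : ∀ y, b ≤ g y)
    (z : E) (δ : ℝ) (hδ : 0 < δ) :
    ∃ v, g v ≤ g z ∧ ∀ y, g v ≤ g y + δ * ‖y - v‖ := by
  classical
  set P : E → E → Prop := fun u y => g y + δ * ‖y - u‖ ≤ g u with hPdef
  have hPrefl : ∀ u, P u u := by intro u; simp [hPdef]
  have hPtrans : ∀ a c d : E, P a c → P c d → P a d := by
    intro a c d h1 h2
    have htri : ‖d - a‖ ≤ ‖d - c‖ + ‖c - a‖ := by
      calc ‖d - a‖ = ‖(d - c) + (c - a)‖ := by rw [sub_add_sub_cancel]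
        _ ≤ ‖d - c‖ + ‖c - a‖ := norm_add_le _ _
    simp only [hPdef] at h1 h2 ⊢
    nlinarith [mul_le_mul_of_nonneg_left htri hδ.le]
  have hbdd : ∀ u : E, BddBelow (g '' {y | P u y}) := by
    intro u; exact ⟨b, by rintro r ⟨y, _, rfl⟩; exact hb y⟩
  have hne : ∀ u : E, (g '' {y | P u y}).Nonempty := fun u => ⟨g u, u, hPrefl u, rfl⟩
  set I : E → ℝ := fun u => sInf (g '' {y | P u y}) with hIdef
  have hex : ∀ (u : E) (n : ℕ), ∃ y, P u y ∧ g y ≤ I u + (1/2)^n := by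
    intro u n
    have : I u < I u + (1/2)^n := lt_add_of_pos_right _ (by positivity)
    obtain ⟨r, ⟨y, hy, rfl⟩, hr⟩ := exists_lt_of_csInf_lt (hne u) this
    exact ⟨y, hy, hr.le⟩
  set u : ℕ → E := fun n => Nat.rec z (fun n v => Classical.choose (hex v n)) n with hudef
  have hu0 : u 0 = z := rfl
  have hP : ∀ n, P (u n) (u (n+1)) := fun n => (Classical.choose_spec (hex (u n) n)).1
  have hIle : ∀ n, g (u (n+1)) ≤ I (u n) + (1/2)^n :=
    fun n => (Classical.choose_spec (hex (u n) n)).2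
  have hchain : ∀ n m, n ≤ m → P (u n) (u m) := by
    intro n m hnm
    induction m with
    | zero => rw [Nat.le_zero] at hnm; subst hnm; exact hPrefl _
    | succ m ih =>
        rcases Nat.lt_or_ge n (m+1) with hlt | hge
        · exact hPtrans _ _ _ (ih (Nat.lt_succ_iff.mp hlt)) (hP m)
        · have : n = m + 1 := le_antisymm hnm hge
          subst this; exact hPrefl _
  have hanti : Antitone (fun n => g (u n)) := by
    refine antitone_nat_of_succ_le ?_
    intro n
    have := hP n
    simp only [hPdef] at this
    nlinarith [norm_nonneg (u (n+1) - u n), hδ]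
  have hdistsum : Summable (fun n => dist (u n) (u (n+1))) := by
    apply summable_of_sum_range_le (c := (g z - b)/δ) (fun n => dist_nonneg)
    intro n
    have htel : δ * ∑ k ∈ Finset.range n, dist (u k) (u (k+1)) ≤ g (u 0) - g (u n) := by
      induction n with
      | zero => simp
      | succ m ih =>
          rw [Finset.sum_range_succ, mul_add]
          have := hP m
          simp only [hPdef] at this
          rw [dist_comm, dist_eq_norm]
          nlinarith
    rw [hu0] at htel
    rw [le_div_iff₀ hδ]
    nlinarith [hb (u n)]
  have hcauchy : CauchySeq u := cauchySeq_of_summable_dist hdistsum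
  obtain ⟨v, hv⟩ := cauchySeq_tendsto_of_complete hcauchy
  have hbddrange : BddBelow (Set.range fun n => g (u n)) := by
    exact ⟨b, by rintro r ⟨n, rfl⟩; exact hb (u n)⟩
  set L : ℝ := ⨅ n, g (u n) with hLdef
  have htendg : Filter.Tendsto (fun n => g (u n)) Filter.atTop (nhds L) :=
    tendsto_atTop_ciInf hanti hbddrange
  have hgvL : g v ≤ L := by
    by_contra hcon
    push_neg at hcon
    set c := (L + g v) / 2 with hc
    have hc1 : c < g v := by rw [hc]; linarith
    have hc2 : L < c := by rw [hc]; linarith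
    have hev := hg v c hc1
    have hev2 : ∀ᶠ n in Filter.atTop, c < g (u n) := hv.eventually hev
    have : c ≤ L := ge_of_tendsto htendg (hev2.mono fun n h => h.le)
    linarith
  have hPv : ∀ n, P (u n) v := by
    intro n
    have hlim : Filter.Tendsto (fun m => g (u m) + δ * ‖u m - u n‖) Filter.atTop
        (nhds (L + δ * ‖v - u n‖)) := by
      exact htendg.add ((((hv.sub_const (u n)).norm).const_mul δ))
    have hev : ∀ᶠ m in Filter.atTop, g (u m) + δ * ‖u m - u n‖ ≤ g (u n) := by
      filter_upwards [Filter.eventually_ge_atTop n] with m hm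
      exact hchain n m hm
    have hle : L + δ * ‖v - u n‖ ≤ g (u n) := le_of_tendsto hlim hev
    show g v + δ * ‖v - u n‖ ≤ g (u n)
    linarith
  refine ⟨v, ?_, ?_⟩
  · have := hPv 0
    rw [hu0] at this
    simp only [hPdef] at this
    nlinarith [norm_nonneg (v - z)]
  · intro y
    by_contra hy
    push_neg at hy
    have hPvy : P v y := by simp only [hPdef]; linarith
    have hPny : ∀ n, P (u n) y := fun n => hPtrans _ _ _ (hPv n) hPvy
    have hIy : ∀ n, I (u n) ≤ g y := by
      intro n
      exact csInf_le (hbdd (u n)) ⟨y, hPny n, rfl⟩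
    have hkey : ∀ n, δ * ‖y - u (n+1)‖ ≤ (1/2)^n := by
      intro n
      have h1 := hPny (n+1)
      simp only [hPdef] at h1
      have h2 := hIle n
      have h3 := hIy n
      linarith
    have htends : Filter.Tendsto (fun n => dist (u (n+1)) y) Filter.atTop (nhds 0) := by
      apply squeeze_zero (fun n => dist_nonneg) (g := fun n => (1/2)^n / δ)
      · intro n
        rw [dist_comm, dist_eq_norm, le_div_iff₀ hδ]
        nlinarith [hkey n]
      · have := (tendsto_pow_atTop_nhds_zero_of_lt_one (r := (1/2:ℝ)) (by norm_num) (by norm_num)).div_const δ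
        simpa using this
    have huy : Filter.Tendsto (fun n => u (n+1)) Filter.atTop (nhds y) :=
      tendsto_iff_dist_tendsto_zero.mpr htends
    have huv : Filter.Tendsto (fun n => u (n+1)) Filter.atTop (nhds v) :=
      hv.comp (Filter.tendsto_add_atTop_nat 1)
    have : y = v := tendsto_nhds_unique huy huv
    subst this
    simp only [sub_self, norm_zero, mul_zero, add_zero] at hy
    linarith

lemma ekeland_ereal {E : Type*} [NormedAddCommGroup E] [NormedSpace ℝ E] [CompleteSpace E]
    (G : E → EReal) (hG : LowerSemicontinuous G) (hnb : ∀ y, G y ≠ ⊥)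
    (b : ℝ) (hb : ∀ y, (b : EReal) ≤ G y) (y₀ : E) (h₀ : G y₀ ≠ ⊤)
    (δ : ℝ) (hδ : 0 < δ) :
    ∃ v, (∃ r : ℝ, G v = (r : EReal)) ∧
      (∀ y, G v ≤ G y + ((δ^2 : ℝ) : EReal)) ∧
      (∀ y, G v ≤ G y + ((δ * ‖y - v‖ : ℝ) : EReal)) := by
  classical
  set S : Set ℝ := {r | ∃ y, G y ≤ (r : EReal)} with hS
  obtain ⟨r₀, hr₀⟩ : ∃ r : ℝ, G y₀ = r := by
    lift G y₀ to ℝ using ⟨h₀, hnb y₀⟩ with a; exact ⟨a, rfl⟩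
  have hSne : S.Nonempty := ⟨r₀, y₀, le_of_eq hr₀⟩
  have hSbdd : BddBelow S := by
    refine ⟨b, ?_⟩
    rintro r ⟨y, hy⟩
    exact_mod_cast le_trans (hb y) hy
  set I : ℝ := sInf S with hI
  obtain ⟨r, hrS, hrlt⟩ : ∃ r ∈ S, r < I + δ^2 :=
    exists_lt_of_csInf_lt hSne (lt_add_of_pos_right _ (by positivity))
  obtain ⟨z, hz⟩ := hrS
  have hIle : ∀ s : ℝ, (∃ y, G y ≤ (s:EReal)) → I ≤ s := fun s hs => csInf_le hSbdd hs
  set M : ℝ := I + δ^2 + 1 with hM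
  have hmin_netop : ∀ y, min (G y) (M : EReal) ≠ ⊤ :=
    fun y => (lt_of_le_of_lt (min_le_right _ _) (EReal.coe_lt_top M)).ne
  have hmin_nebot : ∀ y, min (G y) (M : EReal) ≠ ⊥ := by
    intro y
    exact (lt_min (bot_lt_iff_ne_bot.mpr (hnb y)) (EReal.bot_lt_coe M)).ne'
  set g : E → ℝ := fun y => (min (G y) (M : EReal)).toReal with hg
  have hcoe : ∀ y, (g y : EReal) = min (G y) (M : EReal) :=
    fun y => EReal.coe_toReal (hmin_netop y) (hmin_nebot y)
  have hglsc : LowerSemicontinuous g := by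
    intro x c hc
    have hc' : (c : EReal) < min (G x) (M : EReal) := by
      rw [← hcoe x] at *; exact_mod_cast hc
    have hc1 : (c : EReal) < G x := lt_of_lt_of_le hc' (min_le_left _ _)
    have hc2 : c < M := by exact_mod_cast lt_of_lt_of_le hc' (min_le_right _ _)
    filter_upwards [hG x c hc1] with y hy
    show c < (min (G y) (M:EReal)).toReal
    have : (c : EReal) < min (G y) (M : EReal) := lt_min hy (by exact_mod_cast hc2)
    rw [← hcoe y] at this; exact_mod_cast this
  have hgb : ∀ y, min b M ≤ g y := by
    intro y
    have : ((min b M : ℝ) : EReal) ≤ min (G y) (M : EReal) := by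
      refine le_min (le_trans ?_ (hb y)) ?_
      · exact_mod_cast min_le_left b M
      · exact_mod_cast min_le_right b M
    rw [← hcoe y] at this; exact_mod_cast this
  obtain ⟨v, hv1, hv2⟩ := ekeland_real g hglsc (min b M) hgb z δ hδ
  have hgz : (g z : EReal) ≤ (r : EReal) := by
    rw [hcoe z]; exact le_trans (min_le_left _ _) hz
  have hgz' : g z ≤ r := by exact_mod_cast hgz
  have hvr : g v < M := by linarith
  have hGv : G v = (g v : EReal) := by
    rcases min_eq_iff.mp (hcoe v).symm with ⟨h1, _⟩ | ⟨h1, _⟩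
    · exact h1
    · exfalso
      have : (M : EReal) = (g v : EReal) := by rw [← h1]
      have : M = g v := by exact_mod_cast this
      linarith
  have hGvI : g v ≤ I + δ^2 := by linarith
  refine ⟨v, ⟨g v, hGv⟩, ?_, ?_⟩
  · intro y
    rcases eq_or_ne (G y) ⊤ with h | h
    · rw [h, EReal.top_add_coe]; exact le_top
    obtain ⟨s, hs⟩ : ∃ s : ℝ, G y = s := by
      lift G y to ℝ using ⟨h, hnb y⟩ with a; exact ⟨a, rfl⟩
    have hIs : I ≤ s := hIle s ⟨y, le_of_eq hs⟩
    rw [hGv, hs, ← EReal.coe_add]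
    exact_mod_cast by linarith
  · intro y
    rcases eq_or_ne (G y) ⊤ with h | h
    · rw [h, EReal.top_add_coe]; exact le_top
    obtain ⟨s, hs⟩ : ∃ s : ℝ, G y = s := by
      lift G y to ℝ using ⟨h, hnb y⟩ with a; exact ⟨a, rfl⟩
    have hgy : g y ≤ s := by
      have : (g y : EReal) ≤ (s : EReal) := by rw [hcoe y, hs]; exact min_le_left _ _
      exact_mod_cast this
    have := hv2 y
    rw [hGv, hs, ← EReal.coe_add]
    exact_mod_cast by linarith

/-- Rockafellar's theorem: the subdifferential of a proper convex lower
semicontinuous function is maximally monotone. -/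
theorem stmt17 {E : Type*} [NormedAddCommGroup E] [NormedSpace ℝ E] [CompleteSpace E]
    (f : E → EReal) (hproper : ∃ x, f x ≠ ⊤) (hnotbot : ∀ x, f x ≠ ⊥)
    (hconv : ERealConvexOn f) (hlsc : LowerSemicontinuous f) :
    {p : E × StrongDual ℝ E | p.2 ∈ subdiff f p.1} =
      monoPolar {p : E × StrongDual ℝ E | p.2 ∈ subdiff f p.1} := by
  classical
  obtain ⟨y₀, hy₀⟩ := hproper
  have hfingraph : ∀ (z : E) (z' : StrongDual ℝ E), z' ∈ subdiff f z → ∃ r : ℝ, f z = r := by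
    intro z z' hz
    rcases eq_or_ne (f z) ⊤ with h | h
    · exfalso
      have := hz y₀
      rw [h, EReal.top_add_coe] at this
      exact hy₀ (top_le_iff.mp this)
    · lift f z to ℝ using ⟨h, hnotbot z⟩ with a; exact ⟨a, rfl⟩
  ext p
  obtain ⟨x, xs⟩ := p
  simp only [Set.mem_setOf_eq, monoPolar]
  constructor
  · -- easy direction: the graph is monotone
    rintro hp ⟨z, zs⟩ hq
    obtain ⟨a, ha⟩ := hfingraph x xs hp
    obtain ⟨c, hc⟩ := hfingraph z zs hq
    have h1 := hp z
    have h2 := hq x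
    rw [ha, hc] at h1 h2
    have h1' : a + xs (z - x) ≤ c := by exact_mod_cast h1
    have h2' : c + zs (x - z) ≤ a := by exact_mod_cast h2
    have h3 : zs (x - z) = -(zs (z - x)) := by rw [← map_neg, neg_sub]
    simp only [ContinuousLinearMap.sub_apply]
    rw [h3] at h2'
    linarith
  · -- hard direction
    intro hp
    obtain ⟨w, cw, hw⟩ := exists_affine_minorant f ⟨y₀, hy₀⟩ hnotbot hconv hlsc
    -- Key: ∀ t > 0, ∀ y, f x ≤ f y + (-(xs (y-x)) + (t/2)*‖y-x‖^2)
    have Key : ∀ t : ℝ, 0 < t → ∀ y : E,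
        f x ≤ f y + ((-(xs (y - x)) + (t/2)*‖y - x‖^2 : ℝ) : EReal) := by
      intro t ht y
      set φ : E → ℝ := fun u => -(xs (u - x)) + (t/2)*‖u - x‖^2 with hφdef
      have hφcont : Continuous φ := by
        apply Continuous.add
        · exact (xs.continuous.comp (continuous_id.sub continuous_const)).neg
        · exact continuous_const.mul (((continuous_id.sub continuous_const).norm).pow 2)
      set G : E → EReal := fun u => f u + ((φ u : ℝ) : EReal) with hGdef
      have hGlsc : LowerSemicontinuous G := lsc_add_cont_s17 f hlsc hnotbot φ hφcont
      have hGnb : ∀ u, G u ≠ ⊥ := by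
        intro u
        simp only [hGdef, ne_eq, EReal.add_eq_bot_iff]
        push_neg
        exact ⟨hnotbot u, EReal.coe_ne_bot _⟩
      set K : ℝ := ‖w‖ + ‖xs‖ with hK
      set B : ℝ := w x + cw - K^2/(2*t) with hB
      have hGlb : ∀ u, (B : EReal) ≤ G u := by
        intro u
        have h1 : ((w u + cw : ℝ) : EReal) + ((φ u : ℝ) : EReal) ≤ G u := by
          exact add_le_add_left (hw u) _
        refine le_trans ?_ h1
        rw [← EReal.coe_add]
        have hwu : -(‖w‖ * ‖u - x‖) ≤ w (u - x) := by
          have h := w.le_opNorm (u - x)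
          rw [Real.norm_eq_abs] at h
          have := neg_abs_le (w (u - x))
          linarith
        have hxs : xs (u - x) ≤ ‖xs‖ * ‖u - x‖ := by
          have h := xs.le_opNorm (u - x)
          rw [Real.norm_eq_abs] at h
          linarith [le_abs_self (xs (u - x))]
        have hwdec : w u = w (u - x) + w x := by rw [map_sub]; ring
        show (B : EReal) ≤ ((w u + cw + φ u : ℝ) : EReal)
        have hreal : B ≤ w u + cw + φ u := by
          have hφu : φ u = -(xs (u - x)) + t/2*‖u - x‖^2 := rfl
          have h2t : (0:ℝ) < 2*t := by linarith
          have key : -(w (u - x) - xs (u - x) + t/2*‖u - x‖^2) ≤ (‖w‖+‖xs‖)^2/(2*t) := by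
            rw [le_div_iff₀ h2t]
            have pw := mul_le_mul_of_nonneg_left
              (show -(w (u - x)) ≤ ‖w‖ * ‖u - x‖ by linarith) h2t.le
            have px := mul_le_mul_of_nonneg_left hxs h2t.le
            nlinarith [sq_nonneg (t*‖u - x‖ - (‖w‖+‖xs‖))]
          rw [hB, hφu, hwdec]
          linarith
        exact_mod_cast hreal
      have hGy₀ : G y₀ ≠ ⊤ := by
        obtain ⟨r₀, hr₀⟩ : ∃ r : ℝ, f y₀ = r := by
          lift f y₀ to ℝ using ⟨hy₀, hnotbot y₀⟩ with b'; exact ⟨b', rfl⟩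
        show f y₀ + ((φ y₀ : ℝ) : EReal) ≠ ⊤
        rw [hr₀, ← EReal.coe_add]
        exact EReal.coe_ne_top _
      -- now fix y and argue by contradiction
      rcases eq_or_ne (f y) ⊤ with hfy | hfy
      · rw [hfy, EReal.top_add_coe]; exact le_top
      obtain ⟨s, hs⟩ : ∃ s : ℝ, f y = s := by
        lift f y to ℝ using ⟨hfy, hnotbot y⟩ with a; exact ⟨a, rfl⟩
      rw [hs, ← EReal.coe_add]
      by_contra hcon
      push_neg at hcon
      set R : ℝ := s + φ y with hR
      obtain ⟨c, hc1, hc2⟩ := EReal.exists_between_coe_real hcon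
      have hc1' : R < c := by exact_mod_cast hc1
      obtain ⟨ε, hε, hball⟩ := Metric.eventually_nhds_iff.mp (hlsc x c hc2)
      set K2 : ℝ := 1 + 2*‖xs‖/t with hK2
      have hK2pos : 0 < K2 := by rw [hK2]; have := div_nonneg (mul_nonneg zero_le_two (norm_nonneg xs)) ht.le; linarith
      set δ : ℝ := min (t*ε/4) (min 1 ((c - R)/(2*K2))) with hδdef
      have hδpos : 0 < δ := by
        refine lt_min (by positivity) (lt_min one_pos (div_pos (by linarith) (by positivity)))
      have hδ1 : δ ≤ 1 := le_trans (min_le_right _ _) (min_le_left _ _)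
      have hδε : 2*δ/t < ε := by
        have : δ ≤ t*ε/4 := min_le_left _ _
        rw [div_lt_iff₀ ht]
        nlinarith
      have h5 : δ ≤ (c - R)/(2*K2) := le_trans (min_le_right _ _) (min_le_right _ _)
      clear_value δ R K2
      have hδcR : δ * K2 < c - R := by
        have h6 : δ * K2 ≤ (c-R)/(2*K2)*K2 := mul_le_mul_of_nonneg_right h5 hK2pos.le
        have h7 : (c-R)/(2*K2)*K2 = (c-R)/2 := by field_simp
        linarith
      obtain ⟨v, ⟨gv, hgv⟩, hnear, hmin⟩ :=
        ekeland_ereal G hGlsc hGnb B hGlb y₀ hGy₀ δ hδpos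
      have hfvfin : ∃ Fv : ℝ, f v = Fv := by
        rcases eq_or_ne (f v) ⊤ with h | h
        · exfalso
          have : G v = ⊤ := by rw [hGdef]; simp only [h]; rw [EReal.top_add_coe]
          rw [hgv] at this; exact EReal.coe_ne_top _ this
        · lift f v to ℝ using ⟨h, hnotbot v⟩ with a; exact ⟨a, rfl⟩
      obtain ⟨Fv, hFv⟩ := hfvfin
      have hgveq : gv = Fv + φ v := by
        have : G v = ((Fv + φ v : ℝ) : EReal) := by
          rw [hGdef]; simp only [hFv]; rw [← EReal.coe_add]
        rw [hgv] at this; exact_mod_cast this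
      -- the perturbed function h
      set hh : E → ℝ := fun u => φ u + δ*‖u - v‖ with hhdef
      have hhcont : Continuous hh :=
        hφcont.add (continuous_const.mul ((continuous_id.sub continuous_const).norm))
      have hhconv : ∀ p q : E, ∀ a b : ℝ, 0 ≤ a → 0 ≤ b → a + b = 1 →
          hh (a • p + b • q) ≤ a * hh p + b * hh q := by
        intro p q a b ha hb hab
        have e1 : ∀ z : E, a • p + b • q - z = a • (p - z) + b • (q - z) := by
          intro z
          have : a • (p - z) + b • (q - z) = a • p + b • q - (a + b) • z := by
            rw [smul_sub, smul_sub, add_smul]; abel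
          rw [this, hab, one_smul]
        have n1 : ∀ z : E, ‖a • p + b • q - z‖ ≤ a*‖p - z‖ + b*‖q - z‖ := by
          intro z
          rw [e1 z]
          refine le_trans (norm_add_le _ _) ?_
          rw [norm_smul, norm_smul, Real.norm_eq_abs, Real.norm_eq_abs,
            abs_of_nonneg ha, abs_of_nonneg hb]
        have lin1 : xs (a • p + b • q - x) = a * xs (p - x) + b * xs (q - x) := by
          rw [e1 x, map_add, map_smul, map_smul]; simp [smul_eq_mul]
        simp only [hhdef, hφdef]
        have hsq : ‖a • p + b • q - x‖^2 ≤ a*‖p - x‖^2 + b*‖q - x‖^2 := by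
          have h1 := n1 x
          have h2 : (a*‖p-x‖ + b*‖q-x‖)^2 ≤ a*‖p-x‖^2 + b*‖q-x‖^2 := by
            nlinarith [sq_nonneg (‖p-x‖ - ‖q-x‖), mul_nonneg ha hb, norm_nonneg (p-x), norm_nonneg (q-x)]
          nlinarith [norm_nonneg (a • p + b • q - x), add_nonneg (mul_nonneg ha (norm_nonneg (p-x))) (mul_nonneg hb (norm_nonneg (q-x)))]
        have hnv := n1 v
        rw [lin1]
        nlinarith [mul_le_mul_of_nonneg_left hsq (by linarith : (0:ℝ) ≤ t/2),
          mul_le_mul_of_nonneg_left hnv hδpos.le]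
      have hminh : ∀ u, f v + ((hh v : ℝ) : EReal) ≤ f u + ((hh u : ℝ) : EReal) := by
        intro u
        have h1 : hh v = φ v := by simp [hhdef]
        have h2 := hmin u
        rw [hgv] at h2
        have h3 : G u + ((δ * ‖u - v‖ : ℝ) : EReal) = f u + ((hh u : ℝ):EReal) := by
          rw [hGdef]
          simp only [hhdef]
          rw [add_assoc, ← EReal.coe_add]
        rw [h3] at h2
        rw [h1, hFv]
        calc ((Fv : ℝ) : EReal) + ((φ v : ℝ) : EReal) = ((Fv + φ v : ℝ) : EReal) := by
              rw [← EReal.coe_add]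
          _ = (gv : EReal) := by rw [hgveq]
          _ ≤ f u + ((hh u : ℝ) : EReal) := h2
      obtain ⟨w', hw'f, hw'h⟩ := exists_subgradient_of_min f hnotbot hconv hh hhcont hhconv v Fv hFv hminh
      -- monotone relatedness
      have hpolar := hp (v, w') hw'f
      replace hpolar : 0 ≤ w' (v - x) - xs (v - x) := by simpa using hpolar
      -- subgradient inequality of hh at x
      have hhx := hw'h x
      have hφx : φ x = 0 := by simp [hφdef]
      have hhx' : hh x = δ*‖x - v‖ := by rw [hhdef]; simp [hφx]
      have hhv : hh v = φ v := by simp [hhdef]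
      rw [hhx', hhv] at hhx
      have hw'sub : w' (x - v) = -(w' (v - x)) := by rw [← map_neg, neg_sub]
      rw [hw'sub] at hhx
      have hφv : φ v = -(xs (v - x)) + (t/2)*‖v - x‖^2 := rfl
      rw [hφv] at hhx
      have hnormsub : ‖x - v‖ = ‖v - x‖ := norm_sub_rev x v
      rw [hnormsub] at hhx
      -- from hpolar : 0 ≤ w' (v - x) - xs (v - x)
      have hquad : (t/2)*‖v - x‖^2 ≤ δ*‖v - x‖ := by linarith
      have hvx : ‖v - x‖ ≤ 2*δ/t := by
        rcases eq_or_lt_of_le (norm_nonneg (v - x)) with h0 | h0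
        · rw [← h0]; positivity
        · rw [le_div_iff₀ ht]
          nlinarith
      -- v is in the ball around x
      have hdist : dist v x < ε := by
        rw [dist_eq_norm]
        exact lt_of_le_of_lt hvx hδε
      have hcfv : (c : EReal) < f v := hball hdist
      rw [hFv] at hcfv
      have hcfv' : c < Fv := by exact_mod_cast hcfv
      -- near-minimality at y
      have hnear_y := hnear y
      rw [hgv] at hnear_y
      have hGy : G y = ((s + φ y : ℝ) : EReal) := by
        rw [hGdef]; simp only [hs]; rw [← EReal.coe_add]
      rw [hGy, ← EReal.coe_add] at hnear_y
      have hnear_y' : gv ≤ s + φ y + δ^2 := by exact_mod_cast hnear_y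
      -- φ v lower bound
      have hxsv : xs (v - x) ≤ ‖xs‖ * ‖v - x‖ := by
        have := xs.le_opNorm (v - x)
        rw [Real.norm_eq_abs] at this
        linarith [le_abs_self (xs (v-x))]
      have hφvlb : -(‖xs‖ * (2*δ/t)) ≤ φ v := by
        rw [hφv]
        have h7 : ‖xs‖ * ‖v - x‖ ≤ ‖xs‖ * (2*δ/t) := by
          exact mul_le_mul_of_nonneg_left hvx (norm_nonneg _)
        nlinarith [sq_nonneg ‖v - x‖]
      -- contradiction
      clear_value φ G hh K B
      have hfinal : Fv ≤ R + δ^2 + ‖xs‖ * (2*δ/t) := by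
        rw [hR]
        have := hgveq
        linarith
      have hδK2 : δ^2 + ‖xs‖*(2*δ/t) ≤ δ * K2 := by
        rw [hK2]
        have : δ^2 ≤ δ := by nlinarith
        have h8 : ‖xs‖*(2*δ/t) = δ * (2*‖xs‖/t) := by field_simp
        rw [h8]
        nlinarith
      linarith
    -- conclude from Key by letting t → 0
    intro y
    obtain ⟨a, ha⟩ : ∃ a : ℝ, f x = a := by
      rcases eq_or_ne (f x) ⊤ with h | h
      · exfalso
        have := Key 1 one_pos y₀
        rw [h] at this
        rcases eq_or_ne (f y₀) ⊤ with h2 | h2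
        · exact hy₀ h2
        · obtain ⟨r, hr⟩ : ∃ r : ℝ, f y₀ = r := by
            lift f y₀ to ℝ using ⟨h2, hnotbot y₀⟩ with b'; exact ⟨b', rfl⟩
          rw [hr, ← EReal.coe_add] at this
          exact EReal.coe_ne_top _ (top_le_iff.mp this)
      · lift f x to ℝ using ⟨h, hnotbot x⟩ with b'; exact ⟨b', rfl⟩
    rcases eq_or_ne (f y) ⊤ with hfy | hfy
    · rw [hfy]; exact le_top
    obtain ⟨s, hs⟩ : ∃ s : ℝ, f y = s := by
      lift f y to ℝ using ⟨hfy, hnotbot y⟩ with b'; exact ⟨b', rfl⟩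
    rw [ha, hs, ← EReal.coe_add]
    have hreal : ∀ t : ℝ, 0 < t → a ≤ s + (-(xs (y - x)) + (t/2)*‖y - x‖^2) := by
      intro t ht
      have := Key t ht y
      rw [ha, hs, ← EReal.coe_add] at this
      exact_mod_cast this
    have : a + xs (y - x) ≤ s := by
      refine le_of_forall_pos_le_add ?_
      intro ε hε
      set t : ℝ := 2*ε/(‖y - x‖^2 + 1) with htdef
      have ht : 0 < t := by positivity
      have h1 := hreal t ht
      have h2 : (t/2)*‖y - x‖^2 ≤ ε := by
        have hpos : (0:ℝ) < ‖y - x‖^2 + 1 := by positivity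
        have heq : (t/2)*‖y - x‖^2 = ε * ‖y - x‖^2 / (‖y - x‖^2 + 1) := by
          rw [htdef]; field_simp
        rw [heq, div_le_iff₀ hpos]
        nlinarith [sq_nonneg ‖y - x‖]
      linarith
    exact_mod_cast this
end

section
/- Let E be a real Banach space and S : E ⇉ E* a multifunction. Assume that for every y ∈ E the multifunction x ↦ S(x) + J(x − y) has hyperdense range. Then gra S is stably r_L-dense in E × E*. -/
open Pointwise

/-- The duality mapping `J(x) = {x* : ⟨x, x*⟩ = ‖x‖², ‖x*‖ = ‖x‖}`. -/
def dualityJ {E : Type*} [NormedAddCommGroup E] [NormedSpace ℝ E] (x : E) :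
    Set (StrongDual ℝ E) :=
  {x' | x' x = ‖x‖ ^ 2 ∧ ‖x'‖ = ‖x‖}

/-- `T : E ⇉ E*` has hyperdense range: for every `y*` there is a sequence
`(tₙ, tₙ*)` in the graph of `T` with `(tₙ)` bounded and `‖tₙ* - y*‖ → 0`. -/
def HyperdenseRange {E : Type*} [NormedAddCommGroup E] [NormedSpace ℝ E]
    (T : E → Set (StrongDual ℝ E)) : Prop :=
  ∀ y' : StrongDual ℝ E, ∃ t : ℕ → E × StrongDual ℝ E,
    (∀ n, (t n).2 ∈ T (t n).1) ∧ (∃ C : ℝ, ∀ n, ‖(t n).1‖ ≤ C) ∧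
    Filter.Tendsto (fun n => ‖(t n).2 - y'‖) Filter.atTop (nhds 0)

private lemma rl_aux {u v w p eps B : ℝ} (h1 : w ≤ u + v) (h2 : p ≤ u * v)
    (hw : 0 ≤ w) (hu : 0 ≤ u) (hv : 0 ≤ v) (hvB : v ≤ B) (hu1 : u ≤ 1)
    (heps : (2 * B + 1) * u < eps) :
    1 / 2 * v ^ 2 + 1 / 2 * w ^ 2 + (p - v ^ 2) < eps := by
  nlinarith [sq_nonneg (u + v), mul_nonneg hu hv, mul_nonneg hu (sub_nonneg.mpr hvB)]

theorem stmt18 {E : Type*} [NormedAddCommGroup E] [NormedSpace ℝ E] [CompleteSpace E]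
    (S : E → Set (StrongDual ℝ E))
    (hS : ∀ y : E, HyperdenseRange (fun x => S x + dualityJ (x - y))) :
    StablyRLDense {p : E × StrongDual ℝ E | p.2 ∈ S p.1} := by
  intro y y'
  obtain ⟨t, ht, ⟨C, hC⟩, htend⟩ := hS y y'
  set B : ℝ := max C 0 + ‖y‖ with hBdef
  have hB0 : 0 ≤ B := add_nonneg (le_max_right _ _) (norm_nonneg _)
  refine ⟨B + 1, by linarith, ?_⟩
  intro ε hε
  set δ : ℝ := min 1 (ε / (2 * B + 1)) with hδdef
  have hδpos : 0 < δ := lt_min one_pos (div_pos hε (by linarith))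
  have hδ1 : δ ≤ 1 := min_le_left _ _
  have hδε : (2 * B + 1) * δ ≤ ε := by
    have := min_le_right 1 (ε / (2 * B + 1))
    calc (2 * B + 1) * δ ≤ (2 * B + 1) * (ε / (2 * B + 1)) := by
          apply mul_le_mul_of_nonneg_left this (by linarith)
      _ = ε := by field_simp
  obtain ⟨n, hn⟩ := (htend.eventually (gt_mem_nhds hδpos)).exists
  obtain ⟨a, ha, b, hb, hab⟩ := ht n
  set x : E := (t n).1 - y with hxdef
  set e : StrongDual ℝ E := (t n).2 - y' with hedef
  obtain ⟨hbx, hbn⟩ := hb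
  have hxB : ‖x‖ ≤ B := by
    calc ‖x‖ ≤ ‖(t n).1‖ + ‖y‖ := norm_sub_le _ _
      _ ≤ max C 0 + ‖y‖ := by
          have := hC n
          have : ‖(t n).1‖ ≤ max C 0 := le_trans this (le_max_left _ _)
          linarith
  have heδ : ‖e‖ < δ := hn
  have hae : a - y' = e - b := by
    rw [hedef]
    rw [← hab]
    beta_reduce
    abel
  refine ⟨((t n).1, a), ha, ?_, ?_, ?_⟩
  · exact le_trans hxB (by linarith)
  · show ‖a - y'‖ ≤ B + 1
    rw [hae]
    calc ‖e - b‖ ≤ ‖e‖ + ‖b‖ := norm_sub_le _ _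
      _ ≤ δ + ‖x‖ := by rw [hbn]; linarith
      _ ≤ B + 1 := by linarith
  · show rL x (a - y') < ε
    rw [hae]
    have hebn : ‖e - b‖ ≤ ‖e‖ + ‖x‖ := by
      calc ‖e - b‖ ≤ ‖e‖ + ‖b‖ := norm_sub_le _ _
        _ = ‖e‖ + ‖x‖ := by rw [hbn]
    have hebsq : ‖e - b‖ ^ 2 ≤ (‖e‖ + ‖x‖) ^ 2 :=
      pow_le_pow_left₀ (norm_nonneg _) hebn 2
    have hex : e x ≤ ‖e‖ * ‖x‖ := le_trans (le_abs_self _)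
      (by simpa using e.le_opNorm x)
    have heval : (e - b) x = e x - ‖x‖ ^ 2 := by
      simp [ContinuousLinearMap.sub_apply, hbx]
    have hε' : (2 * B + 1) * ‖e‖ < ε :=
      lt_of_lt_of_le (mul_lt_mul_of_pos_left heδ (by linarith)) hδε
    unfold rL
    rw [heval]
    exact rl_aux hebn hex (norm_nonneg _) (norm_nonneg _) (norm_nonneg _) hxB
      (le_of_lt (lt_of_lt_of_le heδ hδ1)) hε'
end

section
/- (Minty-type condition for maximal monotonicity) Let E be a real Banach space and S : E ⇉ E* be monotone with gra S norm-closed in E × E*. Assume that for every y ∈ E the multifunction x ↦ S(x) + J(x − y) has hyperdense range. Then S is maximally monotone, i.e. gra S = (gra S)^μ. -/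
open Pointwise

theorem stmt19 {E : Type*} [NormedAddCommGroup E] [NormedSpace ℝ E] [CompleteSpace E]
    (S : E → Set (StrongDual ℝ E))
    (hmono : {p : E × StrongDual ℝ E | p.2 ∈ S p.1} ⊆
      monoPolar {p : E × StrongDual ℝ E | p.2 ∈ S p.1})
    (hclosed : IsClosed {p : E × StrongDual ℝ E | p.2 ∈ S p.1})
    (hS : ∀ y : E, HyperdenseRange (fun x => S x + dualityJ (x - y))) :
    {p : E × StrongDual ℝ E | p.2 ∈ S p.1} =
      monoPolar {p : E × StrongDual ℝ E | p.2 ∈ S p.1} := by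
  apply Set.Subset.antisymm hmono
  rintro ⟨y, y'⟩ hp
  obtain ⟨t, ht, -, hlim⟩ := hS y y'
  have h := fun n => (Set.mem_add).1 (ht n)
  choose s hs j hj hsj using h
  -- key estimate : ‖tₙ - y‖ ≤ ‖tₙ* - y'‖
  have key : ∀ n, ‖(t n).1 - y‖ ≤ ‖(t n).2 - y'‖ := by
    intro n
    have hmem : (0 : ℝ) ≤ (s n - y') ((t n).1 - y) := hp ((t n).1, s n) (hs n)
    have hj1 : (j n) ((t n).1 - y) = ‖(t n).1 - y‖ ^ 2 := (hj n).1
    have hrw : (s n - y') ((t n).1 - y)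
        = ((t n).2 - y') ((t n).1 - y) - ‖(t n).1 - y‖ ^ 2 := by
      have : (t n).2 = s n + j n := (hsj n).symm
      rw [this]
      simp [hj1]
      ring
    have key2 : ‖(t n).1 - y‖ ^ 2 ≤ ((t n).2 - y') ((t n).1 - y) := by
      rw [hrw] at hmem; linarith
    have hb : ((t n).2 - y') ((t n).1 - y)
        ≤ ‖(t n).2 - y'‖ * ‖(t n).1 - y‖ :=
      le_trans (le_abs_self _) (((t n).2 - y').le_opNorm _)
    rcases eq_or_lt_of_le (norm_nonneg ((t n).1 - y)) with h0 | h0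
    · rw [← h0]; exact norm_nonneg _
    · have : ‖(t n).1 - y‖ * ‖(t n).1 - y‖ ≤ ‖(t n).2 - y'‖ * ‖(t n).1 - y‖ := by
        nlinarith [key2, hb]
      exact le_of_mul_le_mul_right this h0
  have hnt : Filter.Tendsto (fun n => ‖(t n).1 - y‖) Filter.atTop (nhds 0) :=
    squeeze_zero (fun n => norm_nonneg _) key hlim
  have ht1 : Filter.Tendsto (fun n => (t n).1) Filter.atTop (nhds y) :=
    tendsto_iff_norm_sub_tendsto_zero.2 hnt
  have hs2 : Filter.Tendsto (fun n => s n) Filter.atTop (nhds y') := by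
    rw [tendsto_iff_norm_sub_tendsto_zero]
    apply squeeze_zero (fun n => norm_nonneg _)
      (g := fun n => ‖(t n).2 - y'‖ + ‖(t n).1 - y‖)
    · intro n
      have : s n - y' = ((t n).2 - y') - j n := by
        have : (t n).2 = s n + j n := (hsj n).symm
        rw [this]; abel
      rw [this]
      calc ‖((t n).2 - y') - j n‖ ≤ ‖(t n).2 - y'‖ + ‖j n‖ := norm_sub_le _ _
        _ = ‖(t n).2 - y'‖ + ‖(t n).1 - y‖ := by rw [(hj n).2]
    · simpa using hlim.add hnt
  have : Filter.Tendsto (fun n => (((t n).1, s n) : E × StrongDual ℝ E))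
      Filter.atTop (nhds (y, y')) := ht1.prodMk_nhds hs2
  exact hclosed.mem_of_tendsto this (Filter.Eventually.of_forall fun n => hs n)
end
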